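/- arXiv:2012.12897 — 7 statements merged into one kernel-verified Lean document; each statement's English description precedes it below -/
import Mathlib

section
/- For all real numbers m ≥ 3 and integers l₁, l₂, l₃ with 2 ≤ l₁ ≤ l₂ ≤ l₃, if l₁ + l₂ is even and it is not the case that l₁, l₂, l₃ all have the same parity, then (m-1)^{l₁}((-1)^{l₂+l₃} + (m-1)^{l₃-l₁}) + (-1)^{l₃}(m-2) ≥ 0. -/
theorem stmt_0 (m : ℝ) (hm : 3 ≤ m) (l₁ l₂ l₃ : ℕ)
    (h1 : 2 ≤ l₁) (h12 : l₁ ≤ l₂) (h23 : l₂ ≤ l₃)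
    (heven : Even (l₁ + l₂))
    (hnotall : ¬(l₁ % 2 = l₂ % 2 ∧ l₂ % 2 = l₃ % 2)) :
    0 ≤ (m - 1) ^ l₁ * ((-1 : ℝ) ^ (l₂ + l₃) + (m - 1) ^ (l₃ - l₁)) +
      (-1 : ℝ) ^ l₃ * (m - 2) := by
  have he : (l₁ + l₂) % 2 = 0 := Nat.even_iff.mp heven
  have hpar : l₂ % 2 ≠ l₃ % 2 := by omega
  have hodd : Odd (l₂ + l₃) := by rw [Nat.odd_iff]; omega
  have h13 : l₁ + 1 ≤ l₃ := by omega
  have h2 : (2:ℝ) ≤ m - 1 := by linarith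
  rw [Odd.neg_one_pow hodd]
  have hA : (1:ℝ) ≤ (m-1) ^ l₁ := one_le_pow₀ (by linarith)
  have hB : m - 1 ≤ (m-1) ^ (l₃ - l₁) := le_self_pow₀ (by linarith) (by omega)
  rcases Nat.even_or_odd l₃ with h3 | h3
  · rw [Even.neg_one_pow h3]; nlinarith [mul_le_mul hA hB (by linarith) (by linarith : (0:ℝ) ≤ (m-1)^l₁)]
  · rw [Odd.neg_one_pow h3]; nlinarith [mul_le_mul hA hB (by linarith) (by linarith : (0:ℝ) ≤ (m-1)^l₁)]
end

section
/- For all real numbers m ≥ 3 and integers l₁, l₂, l₃ with 2 ≤ l₁ ≤ l₂ ≤ l₃, if l₁ + l₃ is even and not all of l₁, l₂, l₃ have the same parity, then (-1)^{l₂+l₃}(m-1)^{l₁} + (m-1)^{l₂} + (-1)^{l₂}(m-2) ≥ m(m-2)² ≥ 0. -/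
theorem stmt_3 (m : ℝ) (hm : 3 ≤ m) (l₁ l₂ l₃ : ℕ)
    (h1 : 2 ≤ l₁) (h12 : l₁ ≤ l₂) (h23 : l₂ ≤ l₃)
    (heven : Even (l₁ + l₃))
    (hnotall : ¬(l₁ % 2 = l₂ % 2 ∧ l₂ % 2 = l₃ % 2)) :
    m * (m - 2) ^ 2 ≤
      (-1 : ℝ) ^ (l₂ + l₃) * (m - 1) ^ l₁ + (m - 1) ^ l₂ + (-1 : ℝ) ^ l₂ * (m - 2) ∧
    (0 : ℝ) ≤ m * (m - 2) ^ 2 := by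
  have hm1 : (1 : ℝ) ≤ m - 1 := by linarith
  have hm2 : (0 : ℝ) ≤ m - 2 := by linarith
  rw [Nat.even_add] at heven
  rw [Nat.even_iff, Nat.even_iff] at heven
  have hne : l₁ % 2 ≠ l₂ % 2 := fun h => hnotall ⟨h, by omega⟩
  have hodd : Odd (l₂ + l₃) := by rw [Nat.odd_add, Nat.odd_iff, Nat.even_iff]; omega
  have hpow : ((-1 : ℝ)) ^ (l₂ + l₃) = -1 := Odd.neg_one_pow hodd
  have hl2 : l₁ + 1 ≤ l₂ := by omega
  have hp1 : (m - 1) ^ (l₁ + 1) ≤ (m - 1) ^ l₂ := pow_le_pow_right₀ hm1 hl2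
  have hp2 : (m - 1) ^ 2 ≤ (m - 1) ^ l₁ := pow_le_pow_right₀ hm1 h1
  have hp3 : (m - 1) ^ (l₁ + 1) = (m - 1) ^ l₁ * (m - 1) := pow_succ _ _
  have hs : (-1 : ℝ) ^ l₂ = 1 ∨ (-1 : ℝ) ^ l₂ = -1 := (Nat.even_or_odd l₂).imp Even.neg_one_pow Odd.neg_one_pow
  constructor
  · rw [hpow]
    rcases hs with h | h <;> rw [h] <;> nlinarith [mul_le_mul_of_nonneg_left hp2 hm2]
  · positivity
end

section
/- Suppose G is a finite simple graph with an edge e = uv, and m ≥ 2 is an integer such that P(G−e, m) < (m/(m−1))·P(G, m), where P denotes the number of proper colorings with the given number of colors. Then the DP color function satisfies P_DP(G, m) < P(G, m), i.e., there exists an m-fold cover H of G such that the number of H-colorings of G is strictly less than P(G, m). -/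
/-- An `m`-fold cover of `G`, presented on the vertex set `V × Fin m` with lists
`L v = {v} × Fin m`: each list is a clique, cross-edges join only lists of
adjacent vertices of `G`, and the cross-edges between two lists form a matching. -/
structure IsDPCover {V : Type*} (G : SimpleGraph V) (m : ℕ)
    (H : SimpleGraph (V × Fin m)) : Prop where
  listClique : ∀ (v : V) (j j' : Fin m), j ≠ j' → H.Adj (v, j) (v, j')
  cross : ∀ (u v : V) (j j' : Fin m), u ≠ v → H.Adj (u, j) (v, j') → G.Adj u v
  matching₁ : ∀ (u v : V) (j j₁ j₂ : Fin m), u ≠ v →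
    H.Adj (u, j) (v, j₁) → H.Adj (u, j) (v, j₂) → j₁ = j₂
  matching₂ : ∀ (u v : V) (j₁ j₂ j : Fin m), u ≠ v →
    H.Adj (u, j₁) (v, j) → H.Adj (u, j₂) (v, j) → j₁ = j₂

/-- The number of `H`-colorings: independent transversals of the cover `H`,
recorded as functions picking one vertex from each list. -/
noncomputable def coverColorings {V : Type*} (m : ℕ) (H : SimpleGraph (V × Fin m)) : ℕ :=
  Nat.card {f : V → Fin m // ∀ u v : V, ¬ H.Adj (u, f u) (v, f v)}

/-- The DP color function `P_DP(G, m)`: the minimum number of `H`-colorings over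
all `m`-fold covers `H` of `G`. -/
noncomputable def dpColorFunction {V : Type*} (G : SimpleGraph V) (m : ℕ) : ℕ :=
  sInf {n | ∃ H : SimpleGraph (V × Fin m), IsDPCover G m H ∧ n = coverColorings m H}



/-- The cover of `G` that is the identity matching everywhere except on edge `uv`,
where the matching is shifted by `d`. -/
def twist {V : Type*} (G : SimpleGraph V) (u v : V) {m : ℕ} (d : Fin m) :
    SimpleGraph (V × Fin m) where
  Adj p q := (p.1 = q.1 ∧ p.2 ≠ q.2) ∨ (G.Adj p.1 q.1 ∧
    ((p.1 = u ∧ q.1 = v ∧ q.2 = p.2 + d) ∨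
     (p.1 = v ∧ q.1 = u ∧ p.2 = q.2 + d) ∨
     (¬(p.1 = u ∧ q.1 = v) ∧ ¬(p.1 = v ∧ q.1 = u) ∧ p.2 = q.2)))
  symm := by
    constructor
    rintro ⟨a, i⟩ ⟨b, j⟩ (⟨h1, h2⟩ | ⟨hadj, hc⟩)
    · exact Or.inl ⟨h1.symm, h2.symm⟩
    · exact Or.inr ⟨hadj.symm, by tauto⟩
  loopless := by
    constructor
    rintro ⟨a, i⟩ (⟨_, h⟩ | ⟨hadj, _⟩)
    · exact h rfl
    · exact G.loopless.irrefl a hadj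

lemma twist_isDPCover {V : Type*} (G : SimpleGraph V) (u v : V) (huv : u ≠ v)
    {m : ℕ} (d : Fin m) : IsDPCover G m (twist G u v d) where
  listClique := fun w j j' h => Or.inl ⟨rfl, h⟩
  cross := by
    rintro x y j j' hxy (⟨h, _⟩ | ⟨h, _⟩)
    · exact absurd h hxy
    · exact h
  matching₁ := by
    rintro x y j j₁ j₂ hxy h₁ h₂
    haveI : NeZero m := ⟨by rintro rfl; exact j.elim0⟩
    rcases h₁ with ⟨h, _⟩ | ⟨_, hc₁⟩
    · exact absurd h hxy
    rcases h₂ with ⟨h, _⟩ | ⟨_, hc₂⟩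
    · exact absurd h hxy
    dsimp only at hc₁ hc₂
    rcases hc₁ with ⟨hx, hy, e₁⟩ | ⟨hx, hy, e₁⟩ | ⟨hx, hy, e₁⟩ <;>
      rcases hc₂ with ⟨hx', hy', e₂⟩ | ⟨hx', hy', e₂⟩ | ⟨hx', hy', e₂⟩ <;>
      first
        | exact e₁.trans e₂.symm
        | exact e₁.symm.trans e₂
        | exact add_right_cancel (e₁.symm.trans e₂)
        | exact absurd (hx.symm.trans hx') huv
        | exact absurd (hx.symm.trans hx') huv.symm
        | tauto
  matching₂ := by
    rintro x y j₁ j₂ j hxy h₁ h₂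
    haveI : NeZero m := ⟨by rintro rfl; exact j.elim0⟩
    rcases h₁ with ⟨h, _⟩ | ⟨_, hc₁⟩
    · exact absurd h hxy
    rcases h₂ with ⟨h, _⟩ | ⟨_, hc₂⟩
    · exact absurd h hxy
    dsimp only at hc₁ hc₂
    rcases hc₁ with ⟨hx, hy, e₁⟩ | ⟨hx, hy, e₁⟩ | ⟨hx, hy, e₁⟩ <;>
      rcases hc₂ with ⟨hx', hy', e₂⟩ | ⟨hx', hy', e₂⟩ | ⟨hx', hy', e₂⟩ <;>
      first
        | exact e₁.trans e₂.symm
        | exact e₁.symm.trans e₂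
        | exact add_right_cancel (e₁.symm.trans e₂)
        | exact absurd (hx.symm.trans hx') huv
        | exact absurd (hx.symm.trans hx') huv.symm
        | tauto

lemma twist_colorings_iff {V : Type*} (G : SimpleGraph V) (u v : V)
    (he : G.Adj u v) {m : ℕ} (d : Fin m) (f : V → Fin m) :
    (∀ x y : V, ¬ (twist G u v d).Adj (x, f x) (y, f y)) ↔
      ((∀ x y : V, (G.deleteEdges {s(u, v)}).Adj x y → f x ≠ f y) ∧ f v ≠ f u + d) := by
  constructor
  · intro h
    refine ⟨fun x y hxy hfeq => h x y ?_, fun hcon => h u v ?_⟩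
    · rw [SimpleGraph.deleteEdges_adj] at hxy
      obtain ⟨hadj, hne⟩ := hxy
      have hs1 : ¬(x = u ∧ y = v) := by rintro ⟨rfl, rfl⟩; simp at hne
      have hs2 : ¬(x = v ∧ y = u) := by
        rintro ⟨rfl, rfl⟩; rw [Sym2.eq_swap] at hne; simp at hne
      exact Or.inr ⟨hadj, Or.inr (Or.inr ⟨hs1, hs2, hfeq⟩)⟩
    · exact Or.inr ⟨he, Or.inl ⟨rfl, rfl, hcon⟩⟩
  · rintro ⟨hP, hne⟩ x y hAdj
    rcases hAdj with ⟨h1, h2⟩ | ⟨hadj, hc⟩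
    · dsimp only at h1 h2
      exact h2 (by rw [h1])
    · dsimp only at hadj hc
      rcases hc with ⟨hx, hy, hfd⟩ | ⟨hx, hy, hfd⟩ | ⟨hx, hy, hfeq⟩
      · subst hx; subst hy; exact hne hfd
      · subst hx; subst hy; exact hne hfd
      · refine hP x y (SimpleGraph.deleteEdges_adj.mpr ⟨hadj, ?_⟩) hfeq
        simp only [Set.mem_singleton_iff, Sym2.eq_iff]
        tauto

/-- Lemma 3.1: if `P(G-e, m) < (m/(m-1)) P(G, m)` for an edge `e = uv` and
`m ≥ 2`, then `P_DP(G, m) < P(G, m)`. -/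
theorem stmt_11 {V : Type*} [Fintype V] (G : SimpleGraph V) (u v : V)
    (he : G.Adj u v) (m : ℕ) (hm : 2 ≤ m)
    (hlt : (Nat.card {f : V → Fin m // ∀ x y : V,
        (G.deleteEdges {s(u, v)}).Adj x y → f x ≠ f y} : ℚ) <
      ((m : ℚ) / ((m : ℚ) - 1)) *
        (Nat.card {f : V → Fin m // ∀ x y : V, G.Adj x y → f x ≠ f y} : ℚ)) :
    dpColorFunction G m <
      Nat.card {f : V → Fin m // ∀ x y : V, G.Adj x y → f x ≠ f y} := by
  classical
  haveI : NeZero m := ⟨by omega⟩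
  haveI : Fintype (V → Fin m) := Fintype.ofFinite _
  set P : (V → Fin m) → Prop := fun f => ∀ x y : V, (G.deleteEdges {s(u, v)}).Adj x y → f x ≠ f y
    with hPdef
  set A : Finset (V → Fin m) := Finset.univ.filter P with hAdef
  set N : Fin m → Finset (V → Fin m) :=
    fun d => Finset.univ.filter (fun f => P f ∧ f v = f u + d) with hNdef
  set PG : Finset (V → Fin m) :=
    Finset.univ.filter (fun f => ∀ x y : V, G.Adj x y → f x ≠ f y) with hPGdef
  have hA : Nat.card {f : V → Fin m // P f} = A.card := by
    rw [Nat.card_eq_fintype_card, hAdef]; exact Fintype.card_subtype _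
  have hPG : Nat.card {f : V → Fin m // ∀ x y : V, G.Adj x y → f x ≠ f y} = PG.card := by
    rw [Nat.card_eq_fintype_card, hPGdef]; exact Fintype.card_subtype _
  -- G-properness splits as (G-e)-properness plus the edge constraint
  have hsplit : ∀ f : V → Fin m,
      (∀ x y : V, G.Adj x y → f x ≠ f y) ↔ (P f ∧ f u ≠ f v) := by
    intro f
    constructor
    · intro h
      refine ⟨fun x y hxy => h x y (SimpleGraph.deleteEdges_adj.mp hxy).1, h u v he⟩
    · rintro ⟨hp, hneq⟩ x y hxy hfeq
      by_cases hc : s(x, y) = s(u, v)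
      · rcases Sym2.eq_iff.mp hc with ⟨rfl, rfl⟩ | ⟨rfl, rfl⟩
        · exact hneq hfeq
        · exact hneq hfeq.symm
      · exact hp x y (SimpleGraph.deleteEdges_adj.mpr ⟨hxy, by simpa using hc⟩) hfeq
  have hPG' : PG = Finset.univ.filter (fun f => P f ∧ f u ≠ f v) := by
    rw [hPGdef]; ext f; simp [hsplit f]
  -- the sum of the N d over nonzero d is PG.card
  have hm1 : 1 ≤ m := le_trans one_le_two hm
  have hsum : ∑ d ∈ Finset.univ.erase (0 : Fin m), (N d).card = PG.card := by
    rw [hPG']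
    rw [Finset.card_eq_sum_card_fiberwise
      (f := fun f : V → Fin m => f v - f u) (t := Finset.univ.erase (0 : Fin m))
      (by
        intro f hf
        simp only [Finset.mem_coe, Finset.mem_filter] at hf
        exact Finset.mem_erase.mpr ⟨sub_ne_zero.mpr (Ne.symm hf.2.2), Finset.mem_univ _⟩)]
    refine Finset.sum_congr rfl fun d hd => ?_
    have hd0 : d ≠ 0 := (Finset.mem_erase.mp hd).1
    rw [hNdef]
    congr 1
    ext f
    constructor
    · intro hf
      rw [Finset.mem_filter] at hf
      obtain ⟨-, hp, hveq⟩ := hf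
      refine Finset.mem_filter.mpr ⟨Finset.mem_filter.mpr ⟨Finset.mem_univ _, hp, ?_⟩, ?_⟩
      · intro hfeq
        exact hd0 (left_eq_add.mp (hfeq.trans hveq))
      · exact sub_eq_iff_eq_add'.mpr hveq
    · intro hf
      rw [Finset.mem_filter] at hf
      obtain ⟨hmem, hsub⟩ := hf
      rw [Finset.mem_filter] at hmem
      exact Finset.mem_filter.mpr ⟨Finset.mem_univ _, hmem.2.1, eq_add_of_sub_eq' hsub⟩
  -- pigeonhole: some nonzero d has (m-1) * (N d).card ≥ PG.card
  have hnonempty : (Finset.univ.erase (0 : Fin m)).Nonempty := by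
    refine ⟨⟨1, lt_of_lt_of_le one_lt_two hm⟩, Finset.mem_erase.mpr ⟨?_, Finset.mem_univ _⟩⟩
    apply Fin.ne_of_val_ne
    simp
  have hcarderase : (Finset.univ.erase (0 : Fin m)).card = m - 1 := by
    rw [Finset.card_erase_of_mem (Finset.mem_univ _)]
    simp
  obtain ⟨d, hd, hdge⟩ : ∃ d ∈ Finset.univ.erase (0 : Fin m),
      PG.card ≤ (m - 1) * (N d).card := by
    by_contra hcon
    push_neg at hcon
    have hlt' : ∑ d ∈ Finset.univ.erase (0 : Fin m), (m - 1) * (N d).card <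
        ∑ _d ∈ Finset.univ.erase (0 : Fin m), PG.card :=
      Finset.sum_lt_sum_of_nonempty hnonempty fun d hd => hcon d hd
    rw [← Finset.mul_sum, hsum, Finset.sum_const, hcarderase, smul_eq_mul] at hlt'
    exact lt_irrefl _ hlt'
  have hd0 : d ≠ 0 := (Finset.mem_erase.mp hd).1
  -- translate hlt to finset cards in ℕ
  rw [hA, hPG] at hlt
  have hm1Q : (0 : ℚ) < (m : ℚ) - 1 := by
    have : (2 : ℚ) ≤ (m : ℚ) := by exact_mod_cast hm
    linarith
  have h1 : (A.card : ℚ) * ((m : ℚ) - 1) < (m : ℚ) * PG.card := by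
    rw [div_mul_eq_mul_div, lt_div_iff₀ hm1Q] at hlt
    exact hlt
  have hcast : ((m - 1 : ℕ) : ℚ) = (m : ℚ) - 1 := by
    rw [Nat.cast_sub hm1, Nat.cast_one]
  have h2 : A.card * (m - 1) < m * PG.card := by
    rw [← hcast] at h1
    exact_mod_cast h1
  have hNle : (N d).card ≤ A.card := by
    apply Finset.card_le_card
    intro f hf
    simp only [hNdef, hAdef, Finset.mem_filter] at hf ⊢
    exact ⟨hf.1, hf.2.1⟩
  have h3 : A.card < PG.card + (N d).card := by
    have key : (m - 1) * A.card < (m - 1) * (PG.card + (N d).card) := by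
      calc (m - 1) * A.card = A.card * (m - 1) := mul_comm _ _
        _ < m * PG.card := h2
        _ = (m - 1) * PG.card + PG.card := by
            calc m * PG.card = ((m - 1) + 1) * PG.card := by rw [Nat.sub_add_cancel hm1]
              _ = (m - 1) * PG.card + PG.card := by ring
        _ ≤ (m - 1) * PG.card + (m - 1) * (N d).card := Nat.add_le_add_left hdge _
        _ = (m - 1) * (PG.card + (N d).card) := (Nat.mul_add _ _ _).symm
    exact Nat.lt_of_mul_lt_mul_left key
  -- the number of colorings of the twisted cover
  have hcol : coverColorings m (twist G u v d) = A.card - (N d).card := by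
    have hiff := twist_colorings_iff G u v he d
    have : coverColorings m (twist G u v d) =
        Nat.card {f : V → Fin m // P f ∧ f v ≠ f u + d} := by
      unfold coverColorings
      exact Nat.card_congr (Equiv.subtypeEquivRight fun f => hiff f)
    rw [this, Nat.card_eq_fintype_card]
    rw [Fintype.card_subtype]
    have hkey := Finset.card_filter_add_card_filter_not
      (s := A) (p := fun f => f v = f u + d)
    have e1 : A.filter (fun f => f v = f u + d) = N d := by
      ext f
      simp only [hNdef, hAdef, Finset.mem_filter, Finset.mem_univ, true_and, and_assoc]
    have e2 : A.filter (fun f => ¬ f v = f u + d) =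
        Finset.univ.filter (fun f => P f ∧ f v ≠ f u + d) := by
      ext f
      simp only [hAdef, Finset.mem_filter, Finset.mem_univ, true_and, and_assoc]
    rw [e1, e2] at hkey
    exact Nat.eq_sub_of_add_eq' hkey
  -- conclude
  have hle : dpColorFunction G m ≤ coverColorings m (twist G u v d) :=
    Nat.sInf_le ⟨twist G u v d, twist_isDPCover G u v he.ne d, rfl⟩
  rw [hPG]
  calc dpColorFunction G m ≤ coverColorings m (twist G u v d) := hle
    _ = A.card - (N d).card := hcol
    _ < PG.card := (tsub_lt_iff_right hNle).mpr h3
end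

section
/- Suppose H = (L,H) is an m-fold cover of a graph G with a canonical labeling, i.e., L(v) = {(v,j) : j ∈ [m]} and (u,j)(v,j) ∈ E(H) for all uv ∈ E(G), j ∈ [m]. For each i ∈ [m], let B_i = {(v,i) : v ∈ V(G)}. Then a set I ⊆ V(H) satisfies |I ∩ L(v)| = 1 for every v ∈ V(G) and H[I] is isomorphic to G if and only if I = B_j for some j ∈ [m]. -/
/-- Proposition 3.5: if an `m`-fold cover of a connected graph `G` has a
canonical labeling, then a transversal set `I` induces a subgraph isomorphic to
`G` if and only if `I` is one of the canonical layers `B j`. -/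
theorem stmt_13 {V : Type*} [Fintype V] (G : SimpleGraph V) (hG : G.Connected)
    (m : ℕ) (H : SimpleGraph (V × Fin m)) (hH : IsDPCover G m H)
    (hcan : ∀ u v : V, G.Adj u v → ∀ j : Fin m, H.Adj (u, j) (v, j))
    (I : Set (V × Fin m)) :
    ((∀ v : V, ∃! j : Fin m, (v, j) ∈ I) ∧
        Nonempty (SimpleGraph.induce I H ≃g G)) ↔
      ∃ j : Fin m, I = {p : V × Fin m | p.2 = j} := by
  classical
  constructor
  · rintro ⟨htrans, ⟨φ⟩⟩
    have hne : Nonempty V := hG.nonempty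
    set f : V → Fin m := fun v => (htrans v).choose with hf
    have hfI : ∀ v, (v, f v) ∈ I := fun v => (htrans v).choose_spec.1
    have hmem : ∀ p : V × Fin m, p ∈ I → p.2 = f p.1 := by
      rintro ⟨v, j⟩ hp
      exact (htrans v).choose_spec.2 j hp
    have hadj : ∀ p q : V × Fin m, p ∈ I → q ∈ I → H.Adj p q → p.2 = q.2 := by
      rintro ⟨u, ja⟩ ⟨v, jb⟩ hp hq hAdj
      by_cases huv : u = v
      · subst huv
        exact (hmem _ hp).trans (hmem _ hq).symm
      · have hG' := hH.cross u v ja jb huv hAdj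
        exact hH.matching₁ u v ja ja jb huv (hcan u v hG' ja) hAdj
    have hconn : (SimpleGraph.induce I H).Connected :=
      hG.map φ.symm.toHom φ.symm.surjective
    have hwalk : ∀ a b : ↥I, (SimpleGraph.induce I H).Reachable a b →
        (a : V × Fin m).2 = (b : V × Fin m).2 := by
      intro a b hr
      obtain ⟨w⟩ := hr
      induction w with
      | nil => rfl
      | @cons x y z h w ih => exact (hadj _ _ x.2 y.2 h).trans ih
    obtain ⟨v₀⟩ := hne
    refine ⟨f v₀, ?_⟩
    ext ⟨v, j⟩
    simp only [Set.mem_setOf_eq]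
    have hc : f v = f v₀ :=
      hwalk ⟨(v, f v), hfI v⟩ ⟨(v₀, f v₀), hfI v₀⟩ (hconn.preconnected _ _)
    constructor
    · intro hp
      exact (hmem _ hp).trans hc
    · intro hj
      have hjv : j = f v := hj.trans hc.symm
      exact hjv ▸ hfI v
  · rintro ⟨j, rfl⟩
    constructor
    · intro v
      exact ⟨j, rfl, fun y hy => hy⟩
    · refine ⟨⟨⟨fun p => p.1.1, fun v => ⟨(v, j), rfl⟩, ?_, fun v => rfl⟩, ?_⟩⟩
      · rintro ⟨⟨v, j'⟩, hp⟩
        have : j' = j := hp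
        subst this
        rfl
      · rintro ⟨⟨u, ju⟩, hu⟩ ⟨⟨v, jv⟩, hv⟩
        have hu' : ju = j := hu
        have hv' : jv = j := hv
        subst hu'; subst hv'
        simp only [SimpleGraph.comap_adj, Function.Embedding.coe_subtype,
          Equiv.coe_fn_mk]
        constructor
        · intro h
          exact hcan u v h _
        · intro h
          have huv : u ≠ v := by
            rintro rfl
            exact H.irrefl h
          exact hH.cross u v _ _ huv h
end

section
/- Let G be a graph and H = (L,H) an m-fold cover of G. Let e_{i₁},…,e_{i_p} be edges of G and let c be the number of components of the spanning subgraph of G with edge set {e_{i₁},…,e_{i_p}}. Let S_{i_j} be the set of transversals I ⊆ V(H) (with |I ∩ L(v)| = 1 for all v) such that H[I] contains an edge of E_H(L(y),L(z)) where e_{i_j} = yz. Then |S_{i₁} ∩ ⋯ ∩ S_{i_p}| ≤ m^c. -/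
/-- The counting inequality of Lemma 3.6: the number of transversals of a cover
realizing every chosen edge of a spanning subgraph `G'` of `G` is at most
`m ^ c`, where `c` is the number of connected components of `G'`. -/
theorem stmt_14 {V : Type*} [Fintype V] (G : SimpleGraph V) (m : ℕ)
    (H : SimpleGraph (V × Fin m)) (hH : IsDPCover G m H)
    (G' : SimpleGraph V) (hG' : G' ≤ G) :
    Nat.card {f : V → Fin m // ∀ u v : V, G'.Adj u v → H.Adj (u, f u) (v, f v)} ≤
      m ^ Nat.card G'.ConnectedComponent := by
  classical
  have key : Function.Injective
      (fun f : {f : V → Fin m // ∀ u v : V, G'.Adj u v → H.Adj (u, f u) (v, f v)} =>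
        (fun c : G'.ConnectedComponent => f.1 c.out)) := by
    rintro ⟨f, hf⟩ ⟨g, hg⟩ h
    apply Subtype.ext
    funext v
    have step : ∀ u w : V, G'.Adj u w → f u = g u → f w = g w := by
      intro u w huw hfg
      have h1 : H.Adj (u, f u) (w, f w) := hf u w huw
      have h2 : H.Adj (u, f u) (w, g w) := by rw [hfg]; exact hg u w huw
      exact hH.matching₁ u w (f u) (f w) (g w) huw.ne h1 h2
    have reach : ∀ u w : V, G'.Reachable u w → f u = g u → f w = g w := by
      intro u w ⟨p⟩
      induction p with
      | nil => exact id
      | cons h p ih => exact fun hu => ih (step _ _ h hu)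
    have hout : G'.connectedComponentMk (G'.connectedComponentMk v).out
        = G'.connectedComponentMk v := (G'.connectedComponentMk v).out_eq
    have hrep : G'.Reachable (G'.connectedComponentMk v).out v :=
      SimpleGraph.ConnectedComponent.exact hout
    exact reach _ v hrep (congrFun h (G'.connectedComponentMk v))
  calc Nat.card {f : V → Fin m // ∀ u v : V, G'.Adj u v → H.Adj (u, f u) (v, f v)}
      ≤ Nat.card (G'.ConnectedComponent → Fin m) := Nat.card_le_card_of_injective _ key
    _ = m ^ Nat.card G'.ConnectedComponent := by
        simp [Nat.card_fun, Nat.card_eq_fintype_card]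
end

section
/- Let G = Θ(l₁,…,l_k) be a generalized theta graph with k ≥ 2, l₂ ≤ ⋯ ≤ l_k, l₂ ≥ max{l₁, 2}, and suppose l₁ has parity different from l_j for every j ∈ {2,…,k}. Then there exists N ∈ ℕ such that P_DP(G, m) = P(G, m) for all m ≥ N. -/
/-- Vertex type of the generalized theta graph: two end vertices plus, for
each path `i`, `l i - 1` internal vertices. -/
abbrev ThetaVertexType (k : ℕ) (l : Fin k → ℕ) : Type :=
  Fin 2 ⊕ (Σ i : Fin k, Fin (l i - 1))

/-- The `j`-th vertex along the `i`-th path of the generalized theta graph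
(`j = 0` is the end vertex `u`, `j = l i` is the end vertex `w`). -/
def thetaVert (k : ℕ) (l : Fin k → ℕ) (i : Fin k) (j : ℕ) : ThetaVertexType k l :=
  if hj : j = 0 then Sum.inl 0
  else if h : j < l i then Sum.inr ⟨i, ⟨j - 1, by omega⟩⟩
  else Sum.inl 1

/-- The generalized theta graph `Θ(l 0, …, l (k-1))`: two end vertices joined by
`k` internally disjoint paths, the `i`-th of which has `l i` edges. -/
def thetaGraph (k : ℕ) (l : Fin k → ℕ) : SimpleGraph (ThetaVertexType k l) :=
  SimpleGraph.fromEdgeSet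
    {e | ∃ (i : Fin k) (j : ℕ), j < l i ∧ e = s(thetaVert k l i j, thetaVert k l i (j + 1))}

/-- Number of proper colorings of `G` with `m` colors. -/
noncomputable def properCount {V : Type*} (G : SimpleGraph V) (m : ℕ) : ℕ :=
  Nat.card {f : V → Fin m // ∀ u v : V, G.Adj u v → f u ≠ f v}


namespace Stmt17



def pq (m : ℕ) : ℕ → ℕ × ℕ
  | 0 => (1, 0)
  | n + 1 => ((m - 1) * (pq m n).2, (pq m n).1 + (m - 2) * (pq m n).2)

def pp (m n : ℕ) : ℕ := (pq m n).1
def qq (m n : ℕ) : ℕ := (pq m n).2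

@[simp] lemma pp_zero (m : ℕ) : pp m 0 = 1 := rfl
@[simp] lemma qq_zero (m : ℕ) : qq m 0 = 0 := rfl
lemma pp_succ (m n : ℕ) : pp m (n + 1) = (m - 1) * qq m n := rfl
lemma qq_succ (m n : ℕ) : qq m (n + 1) = pp m n + (m - 2) * qq m n := rfl

lemma parity_pq (m : ℕ) (hm : 2 ≤ m) (n : ℕ) :
    (n % 2 = 0 → pp m n = qq m n + 1) ∧ (n % 2 = 1 → qq m n = pp m n + 1) := by
  have h3 : m - 1 = (m - 2) + 1 := by omega
  induction n with
  | zero => simp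
  | succ n ih =>
    constructor
    · intro h2
      have h1 := ih.2 (by omega)
      rw [qq_succ, pp_succ, h1, h3]; ring
    · intro h2
      have h1 := ih.1 (by omega)
      rw [qq_succ, pp_succ, h1, h3]; ring

lemma qq_pos (m : ℕ) (hm : 3 ≤ m) (n : ℕ) (hn : 1 ≤ n) : 1 ≤ qq m n := by
  induction n with
  | zero => omega
  | succ n ih =>
    rcases Nat.eq_zero_or_pos n with rfl | hn'
    · simp [qq_succ]
    · have := ih hn'
      rw [qq_succ]
      have : 1 * qq m n ≤ (m - 2) * qq m n := Nat.mul_le_mul_right _ (by omega)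
      omega

lemma qq_le_succ (m : ℕ) (hm : 3 ≤ m) (n : ℕ) (hn : 1 ≤ n) : qq m n ≤ qq m (n + 1) := by
  rw [qq_succ]
  have : 1 * qq m n ≤ (m - 2) * qq m n := Nat.mul_le_mul_right _ (by omega)
  omega

lemma qq_mono (m : ℕ) (hm : 3 ≤ m) {n n' : ℕ} (hn : 1 ≤ n) (h : n ≤ n') : qq m n ≤ qq m n' := by
  induction n', h using Nat.le_induction with
  | base => exact le_rfl
  | succ n' hn' ih => exact ih.trans (qq_le_succ m hm n' (by omega))

/-- growth: `qq m (n+1) ≥ (m-2) * qq m n`. -/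
lemma qq_growth (m n : ℕ) : (m - 2) * qq m n ≤ qq m (n + 1) := by
  rw [qq_succ]; omega



variable {m : ℕ}

/-- Composite permutation along a path: `compPerm τ n = τ (n-1) ∘ ⋯ ∘ τ 0`. -/
def compPerm (τ : ℕ → (Fin m ≃ Fin m)) : ℕ → (Fin m ≃ Fin m)
  | 0 => Equiv.refl _
  | n + 1 => (τ 0).trans (compPerm (fun j => τ (j + 1)) n)

@[simp] lemma compPerm_zero (τ : ℕ → (Fin m ≃ Fin m)) : compPerm τ 0 = Equiv.refl _ := rfl
lemma compPerm_succ (τ : ℕ → (Fin m ≃ Fin m)) (n : ℕ) :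
    compPerm τ (n + 1) = (τ 0).trans (compPerm (fun j => τ (j + 1)) n) := rfl

@[simp] lemma compPerm_refl (n : ℕ) :
    compPerm (fun _ => Equiv.refl (Fin m)) n = Equiv.refl _ := by
  induction n with
  | zero => rfl
  | succ n ih => rw [compPerm_succ]; simp [ih]

/-- The chain condition for internal colors `g` of a path with `t` internal
vertices, end colors `a`, `b`, and twists `τ`. -/
def chainCond (t : ℕ) (τ : ℕ → (Fin m ≃ Fin m)) (a b : Fin m) (g : Fin t → Fin m) : Prop :=
  (∀ s : Fin t, (Fin.cons a g : Fin (t+1) → Fin m) s.succ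
      ≠ τ s ((Fin.cons a g : Fin (t+1) → Fin m) s.castSucc)) ∧
  b ≠ τ t ((Fin.cons a g : Fin (t+1) → Fin m) (Fin.last t))

lemma chainCond_cons (t : ℕ) (τ : ℕ → (Fin m ≃ Fin m)) (a b x : Fin m) (g : Fin t → Fin m) :
    chainCond (t+1) τ a b (Fin.cons x g) ↔
      x ≠ τ 0 a ∧ chainCond t (fun j => τ (j + 1)) x b g := by
  unfold chainCond
  rw [Fin.forall_fin_succ]
  constructor
  · rintro ⟨⟨h0, hs⟩, he⟩
    refine ⟨by simpa using h0, ⟨fun s => ?_, ?_⟩⟩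
    · have := hs s
      rw [← Fin.succ_castSucc] at this
      simpa [Fin.cons_succ] using this
    · have := he
      rw [← Fin.succ_last] at this
      simpa [Fin.cons_succ] using this
  · rintro ⟨h0, ⟨hs, he⟩⟩
    refine ⟨⟨by simpa using h0, fun s => ?_⟩, ?_⟩
    · have := hs s
      rw [← Fin.succ_castSucc]
      simpa [Fin.cons_succ] using this
    · rw [← Fin.succ_last]
      simpa [Fin.cons_succ] using he



lemma card_sigma' {ι : Type*} [Fintype ι] (α : ι → Type*) [∀ i, Finite (α i)] :
    Nat.card (Σ i, α i) = ∑ i, Nat.card (α i) := by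
  letI := fun i => Fintype.ofFinite (α i)
  simp [Nat.card_eq_fintype_card]

/-- The set of colorings of a path with `t` internal vertices as a sigma over
the first internal color. -/
def chainEquiv (t : ℕ) (τ : ℕ → (Fin m ≃ Fin m)) (a b : Fin m) :
    {g : Fin (t+1) → Fin m // chainCond (t+1) τ a b g} ≃
      Σ x : Fin m, {g : Fin t → Fin m //
        x ≠ τ 0 a ∧ chainCond t (fun j => τ (j + 1)) x b g} where
  toFun g := ⟨g.1 0, Fin.tail g.1, by
    have h := g.2
    rw [← Fin.cons_self_tail g.1] at h
    exact (chainCond_cons t τ a b _ _).mp h⟩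
  invFun x := ⟨Fin.cons x.1 x.2.1, (chainCond_cons t τ a b _ _).mpr x.2.2⟩
  left_inv g := by
    apply Subtype.ext
    exact Fin.cons_self_tail g.1
  right_inv x := by
    obtain ⟨x, g, h⟩ := x
    simp [Fin.tail_cons]
    rfl


lemma sum_double_ite (m : ℕ) (v w : Fin m) (P Q : ℕ) :
    ∑ x : Fin m, (if x = v then 0 else if w = x then P else Q) =
      if w = v then (m-1) * Q else P + (m-2) * Q := by
  classical
  rw [← Finset.add_sum_erase Finset.univ _ (Finset.mem_univ v), if_pos rfl, zero_add]
  by_cases hwv : w = v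
  · rw [if_pos hwv]
    have key : ∀ x ∈ Finset.univ.erase v,
        (if x = v then 0 else if w = x then P else Q) = Q := by
      intro x hx
      rw [if_neg (Finset.ne_of_mem_erase hx), if_neg]
      intro h; exact (Finset.ne_of_mem_erase hx) (h ▸ hwv)
    rw [Finset.sum_congr rfl key, Finset.sum_const, smul_eq_mul,
      Finset.card_erase_of_mem (Finset.mem_univ v), Finset.card_univ, Fintype.card_fin,
      Nat.mul_comm]
  · rw [if_neg hwv]
    have hw : w ∈ Finset.univ.erase v := Finset.mem_erase.2 ⟨hwv, Finset.mem_univ w⟩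
    rw [← Finset.add_sum_erase _ _ hw, if_neg (Finset.ne_of_mem_erase hw), if_pos rfl]
    congr 1
    have key : ∀ x ∈ (Finset.univ.erase v).erase w,
        (if x = v then 0 else if w = x then P else Q) = Q := by
      intro x hx
      have hx1 := Finset.ne_of_mem_erase hx
      have hx2 := Finset.ne_of_mem_erase (Finset.mem_of_mem_erase hx)
      rw [if_neg hx2, if_neg (fun h => hx1 h.symm)]
    rw [Finset.sum_congr rfl key, Finset.sum_const, smul_eq_mul,
      Finset.card_erase_of_mem hw,
      Finset.card_erase_of_mem (Finset.mem_univ v), Finset.card_univ, Fintype.card_fin,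
      Nat.sub_sub]

lemma pathCount (t : ℕ) (τ : ℕ → (Fin m ≃ Fin m)) (a b : Fin m) :
    Nat.card {g : Fin t → Fin m // chainCond t τ a b g} =
      if b = compPerm τ (t+1) a then pp m (t+1) else qq m (t+1) := by
  induction t generalizing τ a b with
  | zero =>
    have : compPerm τ 1 a = τ 0 a := rfl
    rw [this]
    by_cases hb : b = τ 0 a
    · rw [if_pos hb, show pp m 1 = 0 by simp [pp_succ]]
      have h0 : ∀ g : Fin 0 → Fin m, ¬ chainCond 0 τ a b g := by
        intro g hg
        exact hg.2 (by rw [show (Fin.last 0 : Fin 1) = 0 from rfl, Fin.cons_zero]; exact hb)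
      rw [Nat.card_eq_zero]
      left
      constructor
      intro ⟨g, hg⟩
      exact h0 g hg
    · rw [if_neg hb]
      have : ∀ g : Fin 0 → Fin m, chainCond 0 τ a b g := by
        intro g
        refine ⟨fun s => s.elim0, by rw [show (Fin.last 0 : Fin 1) = 0 from rfl, Fin.cons_zero]; exact hb⟩
      rw [show qq m 1 = 1 by simp [qq_succ]]
      rw [Nat.card_eq_one_iff_unique]
      constructor
      · constructor
        intro ⟨g1, _⟩ ⟨g2, _⟩
        apply Subtype.ext
        funext s; exact s.elim0
      · exact ⟨⟨fun s => s.elim0, this _⟩⟩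
  | succ t ih =>
    rw [Nat.card_congr (chainEquiv t τ a b), card_sigma']
    have hcard : ∀ x : Fin m,
        Nat.card {g : Fin t → Fin m //
          x ≠ τ 0 a ∧ chainCond t (fun j => τ (j + 1)) x b g} =
        if x = τ 0 a then 0 else
          (if b = compPerm (fun j => τ (j + 1)) (t+1) x then pp m (t+1) else qq m (t+1)) := by
      intro x
      by_cases hx : x = τ 0 a
      · rw [if_pos hx, Nat.card_eq_zero]
        left
        constructor
        intro ⟨g, hg⟩
        exact hg.1 hx
      · rw [if_neg hx, ← ih (fun j => τ (j+1)) x b]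
        apply Nat.card_congr
        exact Equiv.subtypeEquivRight (fun g => by simp [hx])
    rw [Finset.sum_congr rfl (fun x _ => hcard x)]
    have hrw : ∀ x : Fin m,
        (if x = τ 0 a then 0 else
          (if b = compPerm (fun j => τ (j + 1)) (t+1) x then pp m (t+1) else qq m (t+1))) =
        (if x = τ 0 a then 0 else
          (if (compPerm (fun j => τ (j + 1)) (t+1)).symm b = x then pp m (t+1) else qq m (t+1))) := by
      intro x
      congr 1
      exact if_congr (Equiv.symm_apply_eq _).symm rfl rfl
    rw [Finset.sum_congr rfl (fun x _ => hrw x), sum_double_ite]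
    have hc : ((compPerm (fun j => τ (j + 1)) (t+1)).symm b = τ 0 a) ↔
        (b = compPerm τ (t+1+1) a) := by
      rw [Equiv.symm_apply_eq, compPerm_succ]
      exact Iff.rfl
    by_cases hb : b = compPerm τ (t+1+1) a
    · rw [if_pos (hc.2 hb), if_pos hb, pp_succ]
    · rw [if_neg (fun h => hb (hc.1 h)), if_neg hb]
      conv_rhs => rw [qq_succ]




lemma exists_extension {m : ℕ} (R : Fin m → Fin m → Prop)
    (hfun : ∀ j j₁ j₂, R j j₁ → R j j₂ → j₁ = j₂)
    (hinj : ∀ j₁ j₂ j', R j₁ j' → R j₂ j' → j₁ = j₂) :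
    ∃ e : Fin m ≃ Fin m, ∀ j j', R j j' → e j = j' := by
  classical
  set D : Set (Fin m) := {j | ∃ j', R j j'} with hD
  have hφ : ∀ j : D, R j.1 (Classical.choose j.2) := fun j => Classical.choose_spec j.2
  set φ : D → Fin m := fun j => Classical.choose j.2 with hphi
  have hφinj : Function.Injective φ := by
    intro j1 j2 h
    apply Subtype.ext
    have h2 : R j2.1 (φ j2) := hφ j2
    rw [← h] at h2
    exact hinj _ _ _ (hφ j1) h2
  set T : Set (Fin m) := Set.range φ with hT
  let e₁ : D ≃ T := Equiv.ofInjective φ hφinj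
  have hcard : Fintype.card (↥(Dᶜ)) = Fintype.card (↥(Tᶜ)) := by
    rw [Fintype.card_compl_set, Fintype.card_compl_set]
    congr 1
    exact (Fintype.card_congr e₁).symm ▸ rfl
  have e₂ : ↥(Dᶜ) ≃ ↥(Tᶜ) := Fintype.equivOfCardEq hcard
  let e : Fin m ≃ Fin m :=
    ((Equiv.Set.sumCompl D).symm.trans ((e₁.sumCongr e₂).trans (Equiv.Set.sumCompl T)))
  refine ⟨e, fun j j' hR => ?_⟩
  have hjD : j ∈ D := ⟨j', hR⟩
  have h1 : (Equiv.Set.sumCompl D).symm j = Sum.inl ⟨j, hjD⟩ := by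
    simp [Equiv.Set.sumCompl_symm_apply_of_mem hjD]
  have : e j = φ ⟨j, hjD⟩ := by
    simp only [e, Equiv.trans_apply, h1, Equiv.sumCongr_apply, Sum.map_inl,
      Equiv.Set.sumCompl_apply_inl, e₁]
    rfl
  rw [this]
  exact (hfun j _ j' (hφ ⟨j, hjD⟩) hR)



lemma L1 {k : ℕ} (r : Fin k → ℕ) (c : ℕ) (hc : 2 ≤ c) (B : Finset (Fin k))
    (hr : ∀ j ∈ B, c ≤ r j) :
    (∏ j ∈ B, (r j + 1)) * c ≤ (c + (2 ^ B.card - 1)) * ∏ j ∈ B, r j := by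
  classical
  induction B using Finset.induction_on with
  | empty => simp
  | @insert j B hjB ih =>
    have hrB : ∀ i ∈ B, c ≤ r i := fun i hi => hr i (Finset.mem_insert_of_mem hi)
    have hrj : c ≤ r j := hr j (Finset.mem_insert_self j B)
    rw [Finset.prod_insert hjB, Finset.prod_insert hjB, Finset.card_insert_of_notMem hjB]
    have h2 : 1 ≤ 2 ^ B.card := Nat.one_le_two_pow
    calc (r j + 1) * (∏ i ∈ B, (r i + 1)) * c
        = (r j + 1) * ((∏ i ∈ B, (r i + 1)) * c) := by ring
      _ ≤ (r j + 1) * ((c + (2 ^ B.card - 1)) * ∏ i ∈ B, r i) :=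
          Nat.mul_le_mul_left _ (ih hrB)
      _ = ((r j + 1) * (c + (2 ^ B.card - 1))) * ∏ i ∈ B, r i := by ring
      _ ≤ ((c + (2 ^ (B.card + 1) - 1)) * r j) * ∏ i ∈ B, r i := by
          apply Nat.mul_le_mul_right
          have h1 : 2 ^ (B.card + 1) = 2 ^ B.card + 2 ^ B.card := by ring
          -- (r+1)(c + (2^t − 1)) ≤ (c + (2^{t+1} − 1)) r  ⇔  c + 2^t − 1 ≤ 2^t r
          have h3 : c + (2 ^ B.card - 1) ≤ 2 ^ B.card * r j := by
            have hmul : 2 ^ B.card ≤ 2 ^ B.card * r j := Nat.le_mul_of_pos_right _ (by omega)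
            have h4 : 2 ^ B.card * (r j - 1) = 2 ^ B.card * r j - 2 ^ B.card := by
              rw [Nat.mul_sub, Nat.mul_one]
            have h5 : r j - 1 ≤ 2 ^ B.card * (r j - 1) := Nat.le_mul_of_pos_left _ (by omega)
            rw [h4] at h5
            omega
          set t := 2 ^ B.card - 1 with ht
          have h6 : 2 ^ (B.card + 1) - 1 = t + t + 1 := by rw [h1]; omega
          rw [h6]
          have h7 : c + t ≤ (t + 1) * r j := by
            have : (t+1) = 2 ^ B.card := by omega
            rw [this]; exact h3
          nlinarith [h7]
      _ = (c + (2 ^ (B.card + 1) - 1)) * (r j * ∏ i ∈ B, r i) := by ring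

lemma claimM₁ {k : ℕ} (p q : Fin k → ℕ) (i₀ : Fin k) (F : Finset (Fin k)) (hiF : i₀ ∈ F)
    (hq0 : 1 ≤ q i₀)
    (hsq : q i₀ = p i₀ + 1) (hsp : ∀ j, j ≠ i₀ → p j = q j + 1)
    (hbig : ∀ j, j ≠ i₀ → 2 ^ (k + 1) * (q i₀ + 1) ≤ q j) :
    ∏ j ∈ F, p j ≤ ∏ j ∈ F, q j := by
  classical
  set B := F.erase i₀ with hB
  set c := 2 ^ (k + 1) * (q i₀ + 1) with hc
  have h2k : (2:ℕ) ≤ 2 ^ (k+1) := by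
    calc (2:ℕ) = 2 ^ 1 := rfl
    _ ≤ 2 ^ (k+1) := Nat.pow_le_pow_right (by norm_num) (by omega)
  have hc2 : 2 ≤ c := le_trans h2k (Nat.le_mul_of_pos_right _ (by omega))
  have hBcard : 2 ^ B.card ≤ 2 ^ k := by
    apply Nat.pow_le_pow_right (by norm_num)
    have := Finset.card_le_univ B
    simpa using this
  have hprodp : ∏ j ∈ F, p j = p i₀ * ∏ j ∈ B, (q j + 1) := by
    rw [← Finset.mul_prod_erase F p hiF]
    congr 1
    exact Finset.prod_congr rfl (fun j hj => hsp j (Finset.ne_of_mem_erase hj))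
  have hprodq : ∏ j ∈ F, q j = q i₀ * ∏ j ∈ B, q j := (Finset.mul_prod_erase F q hiF).symm
  have hL1 := L1 q c hc2 B (fun j hj => hbig j (Finset.ne_of_mem_erase hj))
  have hstep : p i₀ * (c + (2 ^ B.card - 1)) ≤ q i₀ * c := by
    have h3 : p i₀ * (2 ^ B.card - 1) ≤ q i₀ * 2 ^ k :=
      Nat.mul_le_mul (by omega) (by omega)
    have h4 : q i₀ * 2 ^ k + q i₀ * 2 ^ k ≤ c := by
      rw [hc]
      have e1 : 2 ^ (k+1) * (q i₀ + 1) = (q i₀ * 2 ^ k) * 2 + 2 ^ k * 2 := by ring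
      omega
    calc p i₀ * (c + (2 ^ B.card - 1)) = p i₀ * c + p i₀ * (2 ^ B.card - 1) := by ring
      _ ≤ p i₀ * c + c := by omega
      _ = q i₀ * c := by rw [hsq]; ring
  have key : (∏ j ∈ F, p j) * c ≤ (∏ j ∈ F, q j) * c := by
    rw [hprodp, hprodq]
    calc p i₀ * (∏ j ∈ B, (q j + 1)) * c
        = p i₀ * ((∏ j ∈ B, (q j + 1)) * c) := by ring
      _ ≤ p i₀ * ((c + (2 ^ B.card - 1)) * ∏ j ∈ B, q j) := Nat.mul_le_mul_left _ hL1
      _ = (p i₀ * (c + (2 ^ B.card - 1))) * ∏ j ∈ B, q j := by ring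
      _ ≤ (q i₀ * c) * ∏ j ∈ B, q j := Nat.mul_le_mul_right _ hstep
      _ = (q i₀ * ∏ j ∈ B, q j) * c := by ring
  exact Nat.le_of_mul_le_mul_right key (by omega)

lemma claimM₂ {k : ℕ} (p q : Fin k → ℕ) (i₀ : Fin k) (F : Finset (Fin k)) (hiF : i₀ ∈ F)
    (hq0 : 1 ≤ q i₀)
    (hsq : p i₀ = q i₀ + 1) (hsp : ∀ j, j ≠ i₀ → q j = p j + 1)
    (hbig : ∀ j, j ≠ i₀ → 2 ^ (k + 1) * (q i₀ + 1) ≤ q j) :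
    ∏ j ∈ F, q j ≤ ∏ j ∈ F, p j := by
  classical
  set B := F.erase i₀ with hB
  set c := 2 ^ (k + 1) * (q i₀ + 1) - 1 with hc
  have h2k : (2:ℕ) ≤ 2 ^ (k+1) := by
    calc (2:ℕ) = 2 ^ 1 := rfl
    _ ≤ 2 ^ (k+1) := Nat.pow_le_pow_right (by norm_num) (by omega)
  have hc2 : 2 ≤ c := by
    have : 2 * 2 ≤ 2 ^ (k+1) * (q i₀ + 1) := Nat.mul_le_mul h2k (by omega)
    omega
  have hBcard : 2 ^ B.card ≤ 2 ^ k := by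
    apply Nat.pow_le_pow_right (by norm_num)
    have := Finset.card_le_univ B
    simpa using this
  have hprodq : ∏ j ∈ F, q j = q i₀ * ∏ j ∈ B, (p j + 1) := by
    rw [← Finset.mul_prod_erase F q hiF]
    congr 1
    exact Finset.prod_congr rfl (fun j hj => hsp j (Finset.ne_of_mem_erase hj))
  have hprodp : ∏ j ∈ F, p j = p i₀ * ∏ j ∈ B, p j := (Finset.mul_prod_erase F p hiF).symm
  have hL1 := L1 p c hc2 B (fun j hj => by
    have h1 := hbig j (Finset.ne_of_mem_erase hj)
    have h2 := hsp j (Finset.ne_of_mem_erase hj)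
    omega)
  have hstep : q i₀ * (c + (2 ^ B.card - 1)) ≤ p i₀ * c := by
    have h3 : q i₀ * (2 ^ B.card - 1) ≤ q i₀ * 2 ^ k := Nat.mul_le_mul_left _ (by omega)
    have h4 : q i₀ * 2 ^ k + 1 ≤ c := by
      rw [hc]
      have e1 : 2 ^ (k+1) * (q i₀ + 1) = (q i₀ * 2 ^ k) * 2 + 2 ^ k * 2 := by ring
      have h5 : 1 ≤ 2 ^ k := Nat.one_le_two_pow
      have h6 : 1 ≤ q i₀ * 2 ^ k := Nat.mul_le_mul hq0 h5
      omega
    calc q i₀ * (c + (2 ^ B.card - 1)) = q i₀ * c + q i₀ * (2 ^ B.card - 1) := by ring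
      _ ≤ q i₀ * c + c := by omega
      _ = p i₀ * c := by rw [hsq]; ring
  have key : (∏ j ∈ F, q j) * c ≤ (∏ j ∈ F, p j) * c := by
    rw [hprodp, hprodq]
    calc q i₀ * (∏ j ∈ B, (p j + 1)) * c
        = q i₀ * ((∏ j ∈ B, (p j + 1)) * c) := by ring
      _ ≤ q i₀ * ((c + (2 ^ B.card - 1)) * ∏ j ∈ B, p j) := Nat.mul_le_mul_left _ hL1
      _ = (q i₀ * (c + (2 ^ B.card - 1))) * ∏ j ∈ B, p j := by ring
      _ ≤ (p i₀ * c) * ∏ j ∈ B, p j := Nat.mul_le_mul_right _ hstep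
      _ = (p i₀ * ∏ j ∈ B, p j) * c := by ring
  exact Nat.le_of_mul_le_mul_right key (by omega)





lemma sum_canonical {k m : ℕ} (p q : Fin k → ℕ) (a : Fin m) :
    ∑ b : Fin m, ∏ i, (if b = a then p i else q i)
      = ∏ i, p i + (m - 1) * ∏ i, q i := by
  classical
  have h1 : ∀ b : Fin m, ∏ i, (if b = a then p i else q i)
      = if b = a then ∏ i, p i else ∏ i, q i := by
    intro b
    by_cases hb : b = a <;> simp [hb]
  rw [Finset.sum_congr rfl (fun b _ => h1 b),
    ← Finset.add_sum_erase Finset.univ _ (Finset.mem_univ a), if_pos rfl]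
  congr 1
  have h2 : ∀ b ∈ Finset.univ.erase a,
      (if b = a then ∏ i, p i else ∏ i, q i) = ∏ i, q i := by
    intro b hb
    rw [if_neg (Finset.ne_of_mem_erase hb)]
  rw [Finset.sum_congr rfl h2, Finset.sum_const, smul_eq_mul,
    Finset.card_erase_of_mem (Finset.mem_univ a), Finset.card_univ, Fintype.card_fin]

lemma core {k m : ℕ} (p q : Fin k → ℕ) (i₀ : Fin k)
    (hq0 : 1 ≤ q i₀)
    (hbig : ∀ j, j ≠ i₀ → 2 ^ (k + 1) * (q i₀ + 1) ≤ q j)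
    (hsign : (p i₀ = q i₀ + 1 ∧ ∀ j, j ≠ i₀ → q j = p j + 1) ∨
             (q i₀ = p i₀ + 1 ∧ ∀ j, j ≠ i₀ → p j = q j + 1))
    (π : Fin k → Fin m) :
    ∏ i, p i + (m - 1) * ∏ i, q i ≤ ∑ b : Fin m, ∏ i, (if b = π i then p i else q i) := by
  classical
  suffices H : ∀ (n : ℕ) (π : Fin k → Fin m),
      (Finset.univ.filter (fun i => π i ≠ π i₀)).card = n →
      ∏ i, p i + (m - 1) * ∏ i, q i ≤ ∑ b : Fin m, ∏ i, (if b = π i then p i else q i) by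
    exact H _ π rfl
  intro n
  induction n using Nat.strong_induction_on with
  | _ n ih =>
    intro π hn
    by_cases hconst : ∀ i, π i = π i₀
    · have : ∀ b : Fin m, ∏ i, (if b = π i then p i else q i)
          = ∏ i, (if b = π i₀ then p i else q i) := by
        intro b
        exact Finset.prod_congr rfl (fun i _ => by rw [hconst i])
      rw [Finset.sum_congr rfl (fun b _ => this b), sum_canonical]
    · push_neg at hconst
      obtain ⟨i₁, hi₁⟩ := hconst
      set u := π i₀ with hu
      set v := π i₁ with hv
      have huv : v ≠ u := hi₁
      set π' : Fin k → Fin m := fun i => if π i = v then u else π i with hπ'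
      have hne0 : π i₀ ≠ v := fun hcon => huv (hcon ▸ hu).symm
      have hπ'i₀ : π' i₀ = u := by
        simp only [hπ']
        rw [if_neg hne0, ← hu]
      have hπ'i₁ : π' i₁ = u := by
        simp only [hπ']
        simp
        exact fun h => absurd hv.symm h
      -- the filter for π' is strictly smaller
      have hfilt : (Finset.univ.filter (fun i => π' i ≠ π' i₀)).card <
          (Finset.univ.filter (fun i => π i ≠ π i₀)).card := by
        apply Finset.card_lt_card
        constructor
        · intro i hi
          rw [Finset.mem_filter] at hi ⊢
          refine ⟨Finset.mem_univ i, ?_⟩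
          rw [hπ'i₀] at hi
          intro hcon
          apply hi.2
          simp only [hπ']
          rw [hcon, if_neg hne0, ← hu]
        · intro hsub
          have hi₁mem : i₁ ∈ Finset.univ.filter (fun i => π i ≠ π i₀) := by
            rw [Finset.mem_filter]; exact ⟨Finset.mem_univ _, hi₁⟩
          have hmem2 := hsub hi₁mem
          rw [Finset.mem_filter] at hmem2
          exact hmem2.2 (by rw [hπ'i₀, hπ'i₁])
      have hIH := ih _ (hn ▸ hfilt) π' rfl
      refine le_trans hIH ?_
      -- now: ∑_b ∏ ite(b = π' i) ≤ ∑_b ∏ ite(b = π i)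
      set G : Fin m → ℕ := fun b => ∏ i, (if b = π i then p i else q i) with hG
      set G' : Fin m → ℕ := fun b => ∏ i, (if b = π' i then p i else q i) with hG'
      have hvmem : v ∈ Finset.univ.erase u := Finset.mem_erase.2 ⟨huv, Finset.mem_univ _⟩
      have split : ∀ (F : Fin m → ℕ), ∑ b : Fin m, F b =
          F u + (F v + ∑ b ∈ (Finset.univ.erase u).erase v, F b) := by
        intro F
        rw [← Finset.add_sum_erase _ F (Finset.mem_univ u),
          ← Finset.add_sum_erase _ F hvmem]
      rw [split G, split G']
      have hrest : ∀ b ∈ (Finset.univ.erase u).erase v, G' b = G b := by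
        intro b hb
        have hbv : b ≠ v := Finset.ne_of_mem_erase hb
        have hbu : b ≠ u := Finset.ne_of_mem_erase (Finset.mem_of_mem_erase hb)
        apply Finset.prod_congr rfl
        intro i _
        have hπ'i : π' i = if π i = v then u else π i := by simp only [hπ']
        by_cases hiv : π i = v
        · rw [hπ'i, if_pos hiv, if_neg hbu, hiv, if_neg hbv]
        · rw [hπ'i, if_neg hiv]
      have hsums : ∑ b ∈ (Finset.univ.erase u).erase v, G' b
          = ∑ b ∈ (Finset.univ.erase u).erase v, G b := Finset.sum_congr rfl hrest
      have key : G' u + G' v ≤ G u + G v := by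
        set F₁ := Finset.univ.filter (fun i => u = π i) with hF₁
        set N := Finset.univ.filter (fun i => ¬ u = π i) with hN
        set F₂ := N.filter (fun i => v = π i) with hF₂
        set R := N.filter (fun i => ¬ v = π i) with hR
        have hdecomp : ∀ f : Fin k → ℕ,
            ∏ i, f i = (∏ i ∈ F₁, f i) * ((∏ i ∈ F₂, f i) * ∏ i ∈ R, f i) := by
          intro f
          rw [← Finset.prod_filter_mul_prod_filter_not Finset.univ (fun i => u = π i) f,
            ← Finset.prod_filter_mul_prod_filter_not N (fun i => v = π i) f]
        have hmemF₁ : ∀ i ∈ F₁, u = π i := by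
          intro i hi; exact (Finset.mem_filter.1 hi).2
        have hmemF₂ : ∀ i ∈ F₂, v = π i := by
          intro i hi; exact (Finset.mem_filter.1 hi).2
        have hmemR : ∀ i ∈ R, ¬ u = π i ∧ ¬ v = π i := by
          intro i hi
          have h1 := (Finset.mem_filter.1 hi).2
          have h2 := (Finset.mem_filter.1 (Finset.mem_filter.1 hi).1).2
          exact ⟨h2, h1⟩
        have hπ'eq : ∀ i, π' i = if π i = v then u else π i := by
          intro i; simp only [hπ']
        -- values of the four products
        have hGu : G u = (∏ i ∈ F₁, p i) * ((∏ i ∈ F₂, q i) * ∏ i ∈ R, q i) := by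
          simp only [hG]
          rw [hdecomp]
          congr 1
          · exact Finset.prod_congr rfl (fun i hi => if_pos (hmemF₁ i hi))
          congr 1
          · refine Finset.prod_congr rfl (fun i hi => if_neg ?_)
            rw [← hmemF₂ i hi]; exact huv.symm
          · exact Finset.prod_congr rfl (fun i hi => if_neg (hmemR i hi).1)
        have hGv : G v = (∏ i ∈ F₁, q i) * ((∏ i ∈ F₂, p i) * ∏ i ∈ R, q i) := by
          simp only [hG]
          rw [hdecomp]
          congr 1
          · refine Finset.prod_congr rfl (fun i hi => if_neg ?_)
            rw [← hmemF₁ i hi]; exact huv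
          congr 1
          · exact Finset.prod_congr rfl (fun i hi => if_pos (hmemF₂ i hi))
          · exact Finset.prod_congr rfl (fun i hi => if_neg (hmemR i hi).2)
        have hG'u : G' u = (∏ i ∈ F₁, p i) * ((∏ i ∈ F₂, p i) * ∏ i ∈ R, q i) := by
          simp only [hG']
          rw [hdecomp]
          congr 1
          · refine Finset.prod_congr rfl (fun i hi => if_pos ?_)
            rw [hπ'eq i, if_neg (fun hcon => huv (hcon ▸ (hmemF₁ i hi)).symm)]
            exact hmemF₁ i hi
          congr 1
          · refine Finset.prod_congr rfl (fun i hi => if_pos ?_)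
            rw [hπ'eq i, if_pos (hmemF₂ i hi).symm]
          · refine Finset.prod_congr rfl (fun i hi => if_neg ?_)
            rw [hπ'eq i, if_neg (fun hcon => (hmemR i hi).2 hcon.symm)]
            exact (hmemR i hi).1
        have hG'vv : G' v = (∏ i ∈ F₁, q i) * ((∏ i ∈ F₂, q i) * ∏ i ∈ R, q i) := by
          simp only [hG']
          rw [hdecomp]
          congr 1
          · refine Finset.prod_congr rfl (fun i hi => if_neg ?_)
            rw [hπ'eq i, if_neg (fun hcon => huv (hcon ▸ (hmemF₁ i hi)).symm)]
            rw [← hmemF₁ i hi]; exact huv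
          congr 1
          · refine Finset.prod_congr rfl (fun i hi => if_neg ?_)
            rw [hπ'eq i, if_pos (hmemF₂ i hi).symm]
            exact huv
          · refine Finset.prod_congr rfl (fun i hi => if_neg ?_)
            rw [hπ'eq i, if_neg (fun hcon => (hmemR i hi).2 hcon.symm)]
            exact (hmemR i hi).2
        have hi₀F₁ : i₀ ∈ F₁ := Finset.mem_filter.2 ⟨Finset.mem_univ _, hu⟩
        have hiF₂ne : ∀ i ∈ F₂, i ≠ i₀ := by
          intro i hi hcon
          have := hmemF₂ i hi
          rw [hcon] at this
          exact huv (this.symm ▸ hu)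
        set P₁ := ∏ i ∈ F₁, p i
        set Q₁ := ∏ i ∈ F₁, q i
        set P₂ := ∏ i ∈ F₂, p i
        set Q₂ := ∏ i ∈ F₂, q i
        set C := ∏ i ∈ R, q i
        rw [hGu, hGv, hG'u, hG'vv]
        have rearrange : ∀ a b c d e : ℕ, b ≤ a → c ≤ d →
            a * (c * e) + b * (d * e) ≤ a * (d * e) + b * (c * e) := by
          intro a b c d e hba hcd
          obtain ⟨x, rfl⟩ := Nat.le.dest hba
          obtain ⟨y, rfl⟩ := Nat.le.dest hcd
          ring_nf
          nlinarith [Nat.zero_le (x * e * y)]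
        rcases hsign with ⟨hs1, hs2⟩ | ⟨hs1, hs2⟩
        · -- p i₀ = q i₀ + 1 : Q₁ ≤ P₁, P₂ ≤ Q₂
          have hQP : Q₁ ≤ P₁ := claimM₂ p q i₀ F₁ hi₀F₁ hq0 hs1 hs2 hbig
          have hPQ : P₂ ≤ Q₂ := Finset.prod_le_prod' (fun i hi => by
            rw [hs2 i (hiF₂ne i hi)]; omega)
          exact rearrange P₁ Q₁ P₂ Q₂ C hQP hPQ
        · -- q i₀ = p i₀ + 1 : P₁ ≤ Q₁, Q₂ ≤ P₂
          have hQP : P₁ ≤ Q₁ := claimM₁ p q i₀ F₁ hi₀F₁ hq0 hs1 hs2 hbig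
          have hPQ : Q₂ ≤ P₂ := Finset.prod_le_prod' (fun i hi => by
            rw [hs2 i (hiF₂ne i hi)]; omega)
          have := rearrange Q₁ P₁ Q₂ P₂ C hQP hPQ
          omega
      omega


variable (k : ℕ) (l : Fin k → ℕ)

lemma thetaVert_zero (i : Fin k) : thetaVert k l i 0 = Sum.inl 0 := by simp [thetaVert]

lemma thetaVert_of_lt (i : Fin k) {j : ℕ} (h1 : j ≠ 0) (h2 : j < l i) :
    thetaVert k l i j = Sum.inr ⟨i, ⟨j - 1, by omega⟩⟩ := by
  simp [thetaVert, h1, h2]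

lemma thetaVert_of_ge (i : Fin k) {j : ℕ} (h1 : j ≠ 0) (h2 : ¬ j < l i) :
    thetaVert k l i j = Sum.inl 1 := by
  simp [thetaVert, h1, h2]

lemma thetaVert_ne (i : Fin k) {j : ℕ} (h : j < l i) :
    thetaVert k l i j ≠ thetaVert k l i (j + 1) := by
  rcases Nat.eq_zero_or_pos j with rfl | hj
  · rw [thetaVert_zero]
    by_cases h2 : 1 < l i
    · rw [thetaVert_of_lt k l i (by omega) h2]
      simp
    · rw [thetaVert_of_ge k l i (by omega) h2]
      simp [Fin.ext_iff]
  · rw [thetaVert_of_lt k l i (by omega) h]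
    by_cases h2 : j + 1 < l i
    · rw [thetaVert_of_lt k l i (by omega) h2]
      intro hcon
      rw [Sum.inr.injEq] at hcon
      have := congrArg (fun (z : Σ i : Fin k, Fin (l i - 1)) => (z.2 : ℕ)) hcon
      simp at this
      omega
    · rw [thetaVert_of_ge k l i (by omega) h2]
      simp

lemma thetaGraph_adj {x y : ThetaVertexType k l} :
    (thetaGraph k l).Adj x y ↔ ∃ (i : Fin k) (j : ℕ), j < l i ∧
      ((x = thetaVert k l i j ∧ y = thetaVert k l i (j+1)) ∨
       (x = thetaVert k l i (j+1) ∧ y = thetaVert k l i j)) := by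
  rw [thetaGraph, SimpleGraph.fromEdgeSet_adj]
  constructor
  · rintro ⟨⟨i, j, hj, he⟩, hne⟩
    rw [Sym2.eq_iff] at he
    exact ⟨i, j, hj, by tauto⟩
  · rintro ⟨i, j, hj, hor⟩
    refine ⟨⟨i, j, hj, ?_⟩, ?_⟩
    · rw [Sym2.eq_iff]; tauto
    · rcases hor with ⟨rfl, rfl⟩ | ⟨rfl, rfl⟩
      · exact thetaVert_ne k l i hj
      · exact (thetaVert_ne k l i hj).symm


section Master

variable {k m : ℕ} {l : Fin k → ℕ}

/-- dictionary between `Fin.cons`-chains and vertex colorings along a path -/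
lemma dict (hl : ∀ i, 1 ≤ l i) (f : ThetaVertexType k l → Fin m) (i : Fin k)
    (j : ℕ) (hj : j < (l i - 1) + 1) :
    (Fin.cons (f (Sum.inl 0)) (fun s => f (Sum.inr ⟨i, s⟩)) :
        Fin ((l i - 1) + 1) → Fin m) ⟨j, hj⟩ = f (thetaVert k l i j) := by
  rcases j with _ | s
  · rw [thetaVert_zero]
    exact congrArg f rfl |>.symm ▸ (by
      have h0 : (⟨0, hj⟩ : Fin ((l i - 1) + 1)) = 0 := rfl
      rw [h0, Fin.cons_zero])
  · have hs : (⟨s + 1, hj⟩ : Fin ((l i - 1) + 1)) = (⟨s, by omega⟩ : Fin (l i - 1)).succ := rfl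
    rw [hs, Fin.cons_succ, thetaVert_of_lt k l i (by omega) (by omega)]
    rfl

lemma dict_end (hl : ∀ i, 1 ≤ l i) (f : ThetaVertexType k l → Fin m) (i : Fin k) :
    f (thetaVert k l i (l i)) = f (Sum.inl 1) := by
  rw [thetaVert_of_ge k l i (by have := hl i; omega) (by omega)]

/-- the per-path condition equivalence -/
lemma condEquiv (hl : ∀ i, 1 ≤ l i) (σ : ThetaVertexType k l → ThetaVertexType k l → (Fin m ≃ Fin m))
    (f : ThetaVertexType k l → Fin m) (i : Fin k) :
    (∀ j : ℕ, j < l i → f (thetaVert k l i (j+1)) ≠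
        (σ (thetaVert k l i j) (thetaVert k l i (j+1))) (f (thetaVert k l i j))) ↔
    chainCond (l i - 1)
      (fun j => σ (thetaVert k l i j) (thetaVert k l i (j+1)))
      (f (Sum.inl 0)) (f (Sum.inl 1)) (fun s => f (Sum.inr ⟨i, s⟩)) := by
  have hli := hl i
  constructor
  · intro h
    constructor
    · intro s
      have hs1 : (s : ℕ) + 1 < (l i - 1) + 1 := by omega
      have e1 : (Fin.cons (f (Sum.inl 0)) (fun s => f (Sum.inr ⟨i, s⟩)) :
          Fin ((l i - 1) + 1) → Fin m) s.succ = f (thetaVert k l i ((s : ℕ) + 1)) := by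
        have : s.succ = (⟨(s : ℕ) + 1, hs1⟩ : Fin ((l i - 1) + 1)) := by
          apply Fin.ext; simp
        rw [this, dict hl f i _ hs1]
      have e2 : (Fin.cons (f (Sum.inl 0)) (fun s => f (Sum.inr ⟨i, s⟩)) :
          Fin ((l i - 1) + 1) → Fin m) s.castSucc = f (thetaVert k l i (s : ℕ)) := by
        have : s.castSucc = (⟨(s : ℕ), by omega⟩ : Fin ((l i - 1) + 1)) := by
          apply Fin.ext; simp
        rw [this, dict hl f i _ (by omega)]
      rw [e1, e2]
      exact h s (by omega)
    · have e3 : (Fin.cons (f (Sum.inl 0)) (fun s => f (Sum.inr ⟨i, s⟩)) :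
          Fin ((l i - 1) + 1) → Fin m) (Fin.last (l i - 1)) = f (thetaVert k l i (l i - 1)) := by
        have : (Fin.last (l i - 1)) = (⟨l i - 1, by omega⟩ : Fin ((l i - 1) + 1)) := rfl
        rw [this, dict hl f i _ (by omega)]
      rw [e3]
      have hfe : f (Sum.inl 1) = f (thetaVert k l i (l i - 1 + 1)) := by
        rw [show l i - 1 + 1 = l i from by omega, dict_end hl f i]
      rw [hfe]
      exact h (l i - 1) (by omega)
  · intro h j hj
    by_cases hjlt : j < l i - 1
    · have := h.1 ⟨j, hjlt⟩
      have e1 : (Fin.cons (f (Sum.inl 0)) (fun s => f (Sum.inr ⟨i, s⟩)) :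
          Fin ((l i - 1) + 1) → Fin m) (⟨j, hjlt⟩ : Fin (l i - 1)).succ
          = f (thetaVert k l i (j + 1)) := by
        have : (⟨j, hjlt⟩ : Fin (l i - 1)).succ = (⟨j + 1, by omega⟩ : Fin ((l i - 1) + 1)) := rfl
        rw [this, dict hl f i _ (by omega)]
      have e2 : (Fin.cons (f (Sum.inl 0)) (fun s => f (Sum.inr ⟨i, s⟩)) :
          Fin ((l i - 1) + 1) → Fin m) (⟨j, hjlt⟩ : Fin (l i - 1)).castSucc
          = f (thetaVert k l i j) := by
        have : (⟨j, hjlt⟩ : Fin (l i - 1)).castSucc = (⟨j, by omega⟩ : Fin ((l i - 1) + 1)) := rfl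
        rw [this, dict hl f i _ (by omega)]
      rw [e1, e2] at this
      simpa using this
    · have hj' : j = l i - 1 := by omega
      subst hj'
      have := h.2
      have e3 : (Fin.cons (f (Sum.inl 0)) (fun s => f (Sum.inr ⟨i, s⟩)) :
          Fin ((l i - 1) + 1) → Fin m) (Fin.last (l i - 1)) = f (thetaVert k l i (l i - 1)) := by
        have : (Fin.last (l i - 1)) = (⟨l i - 1, by omega⟩ : Fin ((l i - 1) + 1)) := rfl
        rw [this, dict hl f i _ (by omega)]
      rw [e3] at this
      have hfe : f (Sum.inl 1) = f (thetaVert k l i (l i - 1 + 1)) := by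
        rw [show l i - 1 + 1 = l i from by omega, dict_end hl f i]
      rw [hfe] at this
      exact this

end Master

section Master2

variable {k m : ℕ} {l : Fin k → ℕ}

/-- the twisted coloring predicate -/
def TwistPred (l : Fin k → ℕ) (σ : ThetaVertexType k l → ThetaVertexType k l → (Fin m ≃ Fin m))
    (f : ThetaVertexType k l → Fin m) : Prop :=
  ∀ (i : Fin k) (j : ℕ), j < l i → f (thetaVert k l i (j+1)) ≠
    (σ (thetaVert k l i j) (thetaVert k l i (j+1))) (f (thetaVert k l i j))

noncomputable def masterEquiv (hl : ∀ i, 1 ≤ l i)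
    (σ : ThetaVertexType k l → ThetaVertexType k l → (Fin m ≃ Fin m)) :
    {f : ThetaVertexType k l → Fin m // TwistPred l σ f} ≃
      Σ ab : Fin m × Fin m, ∀ i : Fin k, {g : Fin (l i - 1) → Fin m //
        chainCond (l i - 1) (fun j => σ (thetaVert k l i j) (thetaVert k l i (j+1)))
          ab.1 ab.2 g} where
  toFun f := ⟨(f.1 (Sum.inl 0), f.1 (Sum.inl 1)),
    fun i => ⟨fun s => f.1 (Sum.inr ⟨i, s⟩), (condEquiv hl σ f.1 i).mp (f.2 i)⟩⟩
  invFun x := ⟨Sum.elim ![x.1.1, x.1.2] (fun p => (x.2 p.1).1 p.2),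
    fun i => (condEquiv hl σ _ i).mpr (x.2 i).2⟩
  left_inv f := by
    apply Subtype.ext
    funext x
    rcases x with t | ⟨i, s⟩
    · fin_cases t <;> rfl
    · rfl
  right_inv x := by
    rcases x with ⟨⟨a, b⟩, G⟩
    rfl

lemma master (hl : ∀ i, 1 ≤ l i)
    (σ : ThetaVertexType k l → ThetaVertexType k l → (Fin m ≃ Fin m)) :
    Nat.card {f : ThetaVertexType k l → Fin m // TwistPred l σ f} =
      ∑ a : Fin m, ∑ b : Fin m, ∏ i : Fin k,
        (if b = compPerm (fun j => σ (thetaVert k l i j) (thetaVert k l i (j+1))) (l i) a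
         then pp m (l i) else qq m (l i)) := by
  classical
  rw [Nat.card_congr (masterEquiv hl σ), card_sigma']
  rw [← Fintype.sum_prod_type']
  apply Finset.sum_congr rfl
  intro ab _
  rw [Nat.card_pi]
  apply Finset.prod_congr rfl
  intro i _
  rw [pathCount (l i - 1) (fun j => σ (thetaVert k l i j) (thetaVert k l i (j+1))) ab.1 ab.2]
  rw [show (l i - 1) + 1 = l i from by have := hl i; omega]

end Master2

section Glue

variable {k m : ℕ} {l : Fin k → ℕ}

/-- the canonical cover -/
def canonCover {V : Type*} (G : SimpleGraph V) (m : ℕ) : SimpleGraph (V × Fin m) where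
  Adj x y := (x.1 = y.1 ∧ x.2 ≠ y.2) ∨ (G.Adj x.1 y.1 ∧ x.2 = y.2)
  symm := by
    constructor
    rintro x y (⟨h1, h2⟩ | ⟨h1, h2⟩)
    · exact Or.inl ⟨h1.symm, h2.symm⟩
    · exact Or.inr ⟨h1.symm, h2.symm⟩
  loopless := by
    constructor
    rintro x (⟨h1, h2⟩ | ⟨h1, h2⟩)
    · exact h2 rfl
    · exact G.irrefl h1

lemma canonCover_isDPCover {V : Type*} (G : SimpleGraph V) (m : ℕ) :
    IsDPCover G m (canonCover G m) := by
  constructor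
  · intro v j j' hjj'
    exact Or.inl ⟨rfl, hjj'⟩
  · rintro u v j j' huv (⟨h1, _⟩ | ⟨h1, _⟩)
    · exact absurd h1 huv
    · exact h1
  · rintro u v j j₁ j₂ huv (⟨h1, _⟩ | ⟨_, h2⟩) (⟨h1', _⟩ | ⟨_, h2'⟩) <;>
      first | (exact absurd h1 huv) | (exact absurd h1' huv) | (exact h2.symm.trans h2')
  · rintro u v j₁ j₂ j huv (⟨h1, _⟩ | ⟨_, h2⟩) (⟨h1', _⟩ | ⟨_, h2'⟩) <;>
      first | (exact absurd h1 huv) | (exact absurd h1' huv) | (exact h2.trans h2'.symm)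

lemma coverColorings_canonCover {V : Type*} (G : SimpleGraph V) (m : ℕ) :
    coverColorings m (canonCover G m) = properCount G m := by
  unfold coverColorings properCount
  apply Nat.card_congr
  apply Equiv.subtypeEquivRight
  intro f
  constructor
  · intro h u v hadj hfeq
    exact h u v (Or.inr ⟨hadj, hfeq⟩)
  · rintro h u v (⟨rfl, h2⟩ | ⟨h1, h2⟩)
    · exact h2 rfl
    · exact h u v h1 h2

/-- extraction of a twist system from a cover -/
lemma exists_sigma (H : SimpleGraph (ThetaVertexType k l × Fin m))
    (hH : IsDPCover (thetaGraph k l) m H) :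
    ∃ σ : ThetaVertexType k l → ThetaVertexType k l → (Fin m ≃ Fin m),
      ∀ u v j j', u ≠ v → H.Adj (u, j) (v, j') → σ u v j = j' := by
  classical
  have key : ∀ u v : ThetaVertexType k l, ∃ e : Fin m ≃ Fin m,
      ∀ j j', (u ≠ v ∧ H.Adj (u, j) (v, j')) → e j = j' := by
    intro u v
    apply exists_extension (fun j j' => u ≠ v ∧ H.Adj (u, j) (v, j'))
    · rintro j j₁ j₂ ⟨huv, h1⟩ ⟨_, h2⟩
      exact hH.matching₁ u v j j₁ j₂ huv h1 h2
    · rintro j₁ j₂ j ⟨huv, h1⟩ ⟨_, h2⟩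
      exact hH.matching₂ u v j₁ j₂ j huv h1 h2
  choose σ hσ using key
  exact ⟨σ, fun u v j j' huv hadj => hσ u v j j' ⟨huv, hadj⟩⟩

lemma twist_subset (H : SimpleGraph (ThetaVertexType k l × Fin m))
    (hH : IsDPCover (thetaGraph k l) m H)
    (σ : ThetaVertexType k l → ThetaVertexType k l → (Fin m ≃ Fin m))
    (hσ : ∀ u v j j', u ≠ v → H.Adj (u, j) (v, j') → σ u v j = j')
    (f : ThetaVertexType k l → Fin m) (hf : TwistPred l σ f) :
    ∀ u v, ¬ H.Adj (u, f u) (v, f v) := by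
  intro u v hAdj
  by_cases huv : u = v
  · subst huv
    exact H.irrefl hAdj
  · have hG := hH.cross u v _ _ huv hAdj
    rw [thetaGraph_adj] at hG
    obtain ⟨i, j, hj, hor⟩ := hG
    rcases hor with ⟨hu, hv⟩ | ⟨hu, hv⟩
    · apply hf i j hj
      rw [← hu, ← hv]
      exact (hσ u v _ _ huv hAdj).symm
    · apply hf i j hj
      rw [← hu, ← hv]
      exact (hσ v u _ _ (Ne.symm huv) hAdj.symm).symm

lemma properCount_eq_twist (hl : ∀ i, 1 ≤ l i) :
    properCount (thetaGraph k l) m =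
      Nat.card {f : ThetaVertexType k l → Fin m //
        TwistPred l (fun _ _ => Equiv.refl (Fin m)) f} := by
  unfold properCount
  apply Nat.card_congr
  apply Equiv.subtypeEquivRight
  intro f
  constructor
  · intro h i j hj
    simp only [Equiv.refl_apply]
    have : (thetaGraph k l).Adj (thetaVert k l i (j+1)) (thetaVert k l i j) := by
      rw [thetaGraph_adj]
      exact ⟨i, j, hj, Or.inr ⟨rfl, rfl⟩⟩
    exact h _ _ this
  · intro h u v hadj
    rw [thetaGraph_adj] at hadj
    obtain ⟨i, j, hj, hor⟩ := hadj
    have := h i j hj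
    simp only [Equiv.refl_apply] at this
    rcases hor with ⟨hu, hv⟩ | ⟨hu, hv⟩
    · rw [hu, hv]; exact fun hcon => this hcon.symm
    · rw [hu, hv]; exact this

lemma properCount_formula (hl : ∀ i, 1 ≤ l i) :
    properCount (thetaGraph k l) m =
      ∑ a : Fin m, (∏ i : Fin k, pp m (l i) + (m - 1) * ∏ i : Fin k, qq m (l i)) := by
  rw [properCount_eq_twist hl, master hl (fun _ _ => Equiv.refl (Fin m))]
  apply Finset.sum_congr rfl
  intro a _
  rw [← sum_canonical (fun i => pp m (l i)) (fun i => qq m (l i)) a]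
  apply Finset.sum_congr rfl
  intro b _
  apply Finset.prod_congr rfl
  intro i _
  rw [compPerm_refl]
  rfl

end Glue

end Stmt17

open Stmt17 in
set_option maxHeartbeats 2000000 in
/-- Theorem 1.4(ii): if `l 1` has parity different from every `l j` with
`j ≥ 2`, then the DP color function of the generalized theta graph eventually
equals its chromatic polynomial. -/
theorem stmt_17 (k : ℕ) (hk : 2 ≤ k) (l : Fin k → ℕ)
    (h1 : 1 ≤ l ⟨0, by omega⟩)
    (hmono : ∀ i j : Fin k, 1 ≤ i.val → i ≤ j → l i ≤ l j)
    (h2 : max (l ⟨0, by omega⟩) 2 ≤ l ⟨1, by omega⟩)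
    (hpar : ∀ j : Fin k, 1 ≤ j.val → l ⟨0, by omega⟩ % 2 ≠ l j % 2) :
    ∃ N : ℕ, ∀ m : ℕ, N ≤ m →
      dpColorFunction (thetaGraph k l) m = properCount (thetaGraph k l) m := by
  classical
  set i₀ : Fin k := ⟨0, by omega⟩ with hi₀
  set i₁ : Fin k := ⟨1, by omega⟩ with hi₁
  have hne01 : i₁ ≠ i₀ := by
    intro h
    have := congrArg Fin.val h
    simp [hi₀, hi₁] at this
  have h2' : 2 ≤ l i₁ := le_trans (le_max_right _ 2) h2
  have hl : ∀ i, 1 ≤ l i := by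
    intro i
    by_cases hi : i.val = 0
    · have : i = i₀ := Fin.ext (by simp [hi₀, hi])
      rw [this]; exact h1
    · have hmi : l i₁ ≤ l i := by
        apply hmono i₁ i (by simp [hi₁]) (by rw [Fin.le_def]; simp [hi₁]; omega)
      omega
  have hl01 : l i₀ < l i₁ := by
    have hle : l i₀ ≤ l i₁ := le_trans (le_max_left _ 2) h2
    rcases Nat.lt_or_ge (l i₀) (l i₁) with h | h
    · exact h
    · exfalso
      have heq : l i₀ = l i₁ := by omega
      exact hpar i₁ (by simp [hi₁]) (by rw [heq])
  refine ⟨2 ^ (k + 2) + 3, fun m hm => ?_⟩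
  have hm' : 2 ^ (k + 2) + 3 ≤ m := hm
  have hm3 : 3 ≤ m := by
    have : 0 < 2 ^ (k + 2) := Nat.pow_pos (by norm_num)
    omega
  have hq0 : 1 ≤ qq m (l i₀) := qq_pos m hm3 _ h1
  have hvalpos : ∀ j : Fin k, j ≠ i₀ → 1 ≤ j.val := by
    intro j hj
    by_contra hcon
    exact hj (Fin.ext (by simp [hi₀]; omega))
  have hbig : ∀ j, j ≠ i₀ → 2 ^ (k + 1) * (qq m (l i₀) + 1) ≤ qq m (l j) := by
    intro j hj
    have hj1 := hvalpos j hj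
    have hlj : l i₁ ≤ l j := hmono i₁ j (by simp [hi₁]) (by rw [Fin.le_def]; simp [hi₁]; omega)
    have h5 : l i₀ + 1 ≤ l j := by omega
    have h6 : qq m (l i₀ + 1) ≤ qq m (l j) := qq_mono m hm3 (by omega) h5
    have h7 : (m - 2) * qq m (l i₀) ≤ qq m (l i₀ + 1) := qq_growth m (l i₀)
    have h8 : 2 ^ (k + 1) * (qq m (l i₀) + 1) ≤ (m - 2) * qq m (l i₀) := by
      have e : 2 ^ (k + 2) = 2 ^ (k + 1) * 2 := by ring
      calc 2 ^ (k + 1) * (qq m (l i₀) + 1) ≤ 2 ^ (k + 1) * (2 * qq m (l i₀)) :=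
            Nat.mul_le_mul_left _ (by omega)
        _ = 2 ^ (k + 2) * qq m (l i₀) := by rw [e]; ring
        _ ≤ (m - 2) * qq m (l i₀) := Nat.mul_le_mul_right _ (by omega)
    omega
  have hsign : (pp m (l i₀) = qq m (l i₀) + 1 ∧
        ∀ j, j ≠ i₀ → qq m (l j) = pp m (l j) + 1) ∨
      (qq m (l i₀) = pp m (l i₀) + 1 ∧
        ∀ j, j ≠ i₀ → pp m (l j) = qq m (l j) + 1) := by
    rcases Nat.mod_two_eq_zero_or_one (l i₀) with hpar0 | hpar0
    · left
      refine ⟨(parity_pq m (by omega) (l i₀)).1 hpar0, fun j hj => ?_⟩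
      have hj2 := hpar j (hvalpos j hj)
      exact (parity_pq m (by omega) (l j)).2 (by omega)
    · right
      refine ⟨(parity_pq m (by omega) (l i₀)).2 hpar0, fun j hj => ?_⟩
      have hj2 := hpar j (hvalpos j hj)
      exact (parity_pq m (by omega) (l j)).1 (by omega)
  have lower : ∀ H : SimpleGraph (ThetaVertexType k l × Fin m),
      IsDPCover (thetaGraph k l) m H →
      properCount (thetaGraph k l) m ≤ coverColorings m H := by
    intro H hH
    obtain ⟨σ, hσ⟩ := exists_sigma H hH
    have step1 : Nat.card {f : ThetaVertexType k l → Fin m // TwistPred l σ f} ≤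
        coverColorings m H := by
      unfold coverColorings
      apply Nat.card_le_card_of_injective
        (fun x => (⟨x.1, fun u v => twist_subset H hH σ hσ x.1 x.2 u v⟩ :
          {f : ThetaVertexType k l → Fin m // ∀ u v, ¬ H.Adj (u, f u) (v, f v)}))
      intro x y hxy
      have hval := congrArg Subtype.val hxy
      exact Subtype.ext hval
    refine le_trans ?_ step1
    rw [master hl σ, properCount_formula hl]
    apply Finset.sum_le_sum
    intro a _
    exact core (fun i => pp m (l i)) (fun i => qq m (l i)) i₀ hq0 hbig hsign
      (fun i => compPerm (fun j => σ (thetaVert k l i j) (thetaVert k l i (j+1))) (l i) a)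
  have hmem : properCount (thetaGraph k l) m ∈
      {n | ∃ H : SimpleGraph (ThetaVertexType k l × Fin m),
        IsDPCover (thetaGraph k l) m H ∧ n = coverColorings m H} :=
    ⟨canonCover (thetaGraph k l) m, canonCover_isDPCover _ m,
      (coverColorings_canonCover _ m).symm⟩
  unfold dpColorFunction
  apply le_antisymm
  · exact Nat.sInf_le hmem
  · apply le_csInf ⟨_, hmem⟩
    rintro n ⟨H, hH, rfl⟩
    exact lower H hH
end

section
/- Let G = Θ(l₁,l₂,l₃) with 2 ≤ l₁ ≤ l₂ ≤ l₃ all of the same parity. Then for all m ≥ 3, P_DP(G, m) = (1/m)[(m−1)^{l₁+l₂+l₃} − (m−1)^{l₁} − (m−1)^{l₂} − (m−1)^{l₃} + 2(−1)^{l₁+l₂+l₃}]. -/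
namespace ThetaAux

variable {m : ℕ}

/-- composite permutation along first `n` edges -/
def compo (σ : ℕ → Fin m ≃ Fin m) : ℕ → (Fin m ≃ Fin m)
  | 0 => Equiv.refl _
  | n + 1 => (compo σ n).trans (σ n)

@[simp] lemma compo_zero (σ : ℕ → Fin m ≃ Fin m) : compo σ 0 = Equiv.refl _ := rfl

lemma compo_succ_apply (σ : ℕ → Fin m ≃ Fin m) (n : ℕ) (a : Fin m) :
    compo σ (n + 1) a = σ n (compo σ n a) := rfl

/-- value at position `j` along a path with `n` edges, ends `a`,`b`, interior `g`. -/
def pathVal (n : ℕ) (a b : Fin m) (g : Fin (n - 1) → Fin m) (j : ℕ) : Fin m :=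
  if hj : j = 0 then a
  else if h : j < n then g ⟨j - 1, by omega⟩
  else b

def PathSet (n : ℕ) (σ : ℕ → Fin m ≃ Fin m) (a b : Fin m) : Type :=
  {g : Fin (n - 1) → Fin m //
    ∀ j < n, pathVal n a b g (j + 1) ≠ σ j (pathVal n a b g j)}

instance (n : ℕ) (σ : ℕ → Fin m ≃ Fin m) (a b : Fin m) : Finite (PathSet n σ a b) :=
  Subtype.finite

noncomputable def pcount (n : ℕ) (σ : ℕ → Fin m ≃ Fin m) (a b : Fin m) : ℕ :=
  Nat.card (PathSet n σ a b)

lemma pathVal_zero (n : ℕ) (a b : Fin m) (g : Fin (n-1) → Fin m) :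
    pathVal n a b g 0 = a := rfl

lemma pathVal_last (n : ℕ) (hn : 1 ≤ n) (a b : Fin m) (g : Fin (n-1) → Fin m) :
    pathVal n a b g n = b := by
  unfold pathVal
  rw [dif_neg (by omega), dif_neg (by omega)]

lemma pcount_one (σ : ℕ → Fin m ≃ Fin m) (a b : Fin m) :
    pcount 1 σ a b = if σ 0 a = b then 0 else 1 := by
  unfold pcount
  have hval : ∀ g : Fin 0 → Fin m, (∀ j < 1, pathVal 1 a b g (j + 1) ≠ σ j (pathVal 1 a b g j))
      ↔ σ 0 a ≠ b := by
    intro g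
    constructor
    · intro h
      have := h 0 (by norm_num)
      rw [pathVal_zero, pathVal_last 1 le_rfl] at this
      exact fun hc => this hc.symm
    · intro h j hj
      interval_cases j
      rw [pathVal_zero, pathVal_last 1 le_rfl]
      exact fun hc => h hc.symm
  by_cases hc : σ 0 a = b
  · rw [if_pos hc]
    have : IsEmpty (PathSet 1 σ a b) := by
      constructor
      rintro ⟨g, hg⟩
      exact (hval g).1 hg hc
    exact Nat.card_of_isEmpty
  · rw [if_neg hc]
    have e : PathSet 1 σ a b ≃ (Fin 0 → Fin m) :=
      { toFun := fun g => g.1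
        invFun := fun g => ⟨g, (hval g).2 hc⟩
        left_inv := fun _ => rfl
        right_inv := fun _ => rfl }
    rw [Nat.card_congr e]
    simp [Nat.card_eq_fintype_card]


lemma pathVal_peel (n : ℕ) (hn : 1 ≤ n) (a b : Fin m) (g : Fin (n + 1 - 1) → Fin m)
    (j : ℕ) (hj : j ≤ n) :
    pathVal (n + 1) a b g j =
      pathVal n a (g ⟨n - 1, by omega⟩) (fun t => g ⟨t.1, by omega⟩) j := by
  unfold pathVal
  by_cases h0 : j = 0
  · simp [h0]
  · rw [dif_neg h0, dif_neg h0, dif_pos (by omega)]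
    by_cases h1 : j < n
    · rw [dif_pos h1]
    · rw [dif_neg h1]
      have hj' : j = n := by omega
      subst hj'
      rfl

def stepFwd (n : ℕ) (hn : 1 ≤ n) (σ : ℕ → Fin m ≃ Fin m) (a b : Fin m)
    (g : PathSet (n + 1) σ a b) : Σ c : Fin m, {_h : PathSet n σ a c // σ n c ≠ b} := by
  refine ⟨g.1 ⟨n - 1, by omega⟩, ⟨⟨fun t => g.1 ⟨t.1, by omega⟩, ?_⟩, ?_⟩⟩
  · intro j hj
    have h1 := g.2 j (by omega)
    rw [pathVal_peel n hn a b g.1 (j+1) (by omega), pathVal_peel n hn a b g.1 j (by omega)] at h1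
    exact h1
  · have h1 := g.2 n (by omega)
    rw [pathVal_last (n+1) (by omega), pathVal_peel n hn a b g.1 n le_rfl,
      pathVal_last n hn] at h1
    exact fun hc => h1 hc.symm

def stepBwd (n : ℕ) (hn : 1 ≤ n) (σ : ℕ → Fin m ≃ Fin m) (a b : Fin m)
    (x : Σ c : Fin m, {_h : PathSet n σ a c // σ n c ≠ b}) : PathSet (n + 1) σ a b := by
  refine ⟨fun t => if ht : t.1 < n - 1 then (x.2.1).1 ⟨t.1, ht⟩ else x.1, ?_⟩
  rcases x with ⟨c, ⟨⟨g, hg⟩, hcb⟩⟩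
  simp only
  set G : Fin (n + 1 - 1) → Fin m := fun t => if ht : t.1 < n - 1 then g ⟨t.1, ht⟩ else c
    with hG
  have hGval : ∀ k, k ≤ n → pathVal (n+1) a b G k = pathVal n a c g k := by
    intro k hk
    rw [pathVal_peel n hn a b G k hk]
    have h1 : G ⟨n - 1, by omega⟩ = c := by
      rw [hG]; simp
    have h2 : (fun t : Fin (n-1) => G ⟨t.1, by omega⟩) = g := by
      funext t
      rw [hG]
      simp [t.2]
    rw [h1, h2]
  intro j hj
  by_cases hjn : j < n
  · have h1 := hg j hjn
    rw [hGval (j+1) (by omega), hGval j (by omega)]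
    exact h1
  · have hj' : j = n := by omega
    rw [hj', pathVal_last (n+1) (by omega), hGval n le_rfl, pathVal_last n hn]
    exact fun hc => hcb hc.symm

lemma step_left_inv (n : ℕ) (hn : 1 ≤ n) (σ : ℕ → Fin m ≃ Fin m) (a b : Fin m)
    (g : PathSet (n + 1) σ a b) : stepBwd n hn σ a b (stepFwd n hn σ a b g) = g := by
  obtain ⟨g, hg⟩ := g
  apply Subtype.ext
  funext t
  simp only [stepFwd, stepBwd]
  by_cases ht : t.1 < n - 1
  · rw [dif_pos ht]
  · rw [dif_neg ht]
    congr 1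
    apply Fin.ext
    simp only
    have := t.2
    omega

lemma stepBwd_val (n : ℕ) (hn : 1 ≤ n) (σ : ℕ → Fin m ≃ Fin m) (a b : Fin m)
    (x : Σ c : Fin m, {_h : PathSet n σ a c // σ n c ≠ b}) (t : Fin (n + 1 - 1)) :
    (stepBwd n hn σ a b x).1 t = if ht : t.1 < n - 1 then (x.2.1).1 ⟨t.1, ht⟩ else x.1 := rfl

lemma stepFwd_injective (n : ℕ) (hn : 1 ≤ n) (σ : ℕ → Fin m ≃ Fin m) (a b : Fin m) :
    Function.Injective (stepFwd n hn σ a b) := by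
  intro x y h
  have := congrArg (stepBwd n hn σ a b) h
  rwa [step_left_inv, step_left_inv] at this

lemma stepBwd_injective (n : ℕ) (hn : 1 ≤ n) (σ : ℕ → Fin m ≃ Fin m) (a b : Fin m) :
    Function.Injective (stepBwd n hn σ a b) := by
  rintro ⟨c, ⟨⟨g, hg⟩, hcb⟩⟩ ⟨c', ⟨⟨g', hg'⟩, hcb'⟩⟩ h
  have hfun := congrArg Subtype.val h
  have hc : c = c' := by
    have h1 := congrFun hfun ⟨n - 1, by omega⟩
    rw [stepBwd_val, stepBwd_val, dif_neg (by simp), dif_neg (by simp)] at h1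
    exact h1
  subst hc
  have hgg : g = g' := by
    funext t
    have h1 := congrFun hfun ⟨t.1, by omega⟩
    rw [stepBwd_val, stepBwd_val, dif_pos t.2, dif_pos t.2] at h1
    exact h1
  subst hgg
  rfl

lemma nat_card_sigma {ι : Type*} [Fintype ι] (f : ι → Type*) [hf : ∀ i, Finite (f i)] :
    Nat.card (Σ i, f i) = ∑ i, Nat.card (f i) := by
  classical
  letI : ∀ i, Fintype (f i) := fun i => Fintype.ofFinite _
  simp [Nat.card_eq_fintype_card, Fintype.card_sigma]

lemma pcount_succ (n : ℕ) (hn : 1 ≤ n) (σ : ℕ → Fin m ≃ Fin m) (a b : Fin m) :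
    pcount (n + 1) σ a b =
      ∑ c : Fin m, if σ n c = b then 0 else pcount n σ a c := by
  have h1 : pcount (n + 1) σ a b =
      Nat.card (Σ c : Fin m, {_h : PathSet n σ a c // σ n c ≠ b}) := by
    apply le_antisymm
    · exact Nat.card_le_card_of_injective _ (stepFwd_injective n hn σ a b)
    · exact Nat.card_le_card_of_injective _ (stepBwd_injective n hn σ a b)
  rw [h1, nat_card_sigma]
  apply Finset.sum_congr rfl
  intro c _
  by_cases hc : σ n c = b
  · rw [if_pos hc]
    have : IsEmpty {_h : PathSet n σ a c // σ n c ≠ b} := ⟨fun x => x.2 hc⟩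
    exact Nat.card_of_isEmpty
  · rw [if_neg hc]
    exact Nat.card_congr (Equiv.subtypeUnivEquiv fun _ => hc)

/-- `((m-1)^n - (-1)^n)/m`, the path-count constant. -/
def pq (m n : ℕ) : ℚ := (((m : ℚ) - 1) ^ n - (-1) ^ n) / m

lemma sum_ite_equiv (e : Fin m ≃ Fin m) (b : Fin m) (f : Fin m → ℚ) :
    ∑ c : Fin m, (if e c = b then 0 else f c) = (∑ c : Fin m, f c) - f (e.symm b) := by
  have h1 : ∀ c : Fin m, (if e c = b then (0:ℚ) else f c)
      = f c - (if c = e.symm b then f c else 0) := by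
    intro c
    by_cases hc : e c = b
    · rw [if_pos hc, if_pos (by rw [Equiv.eq_symm_apply]; exact hc)]
      ring
    · rw [if_neg hc, if_neg (by rw [← Equiv.eq_symm_apply] at hc; exact hc)]
      ring
  rw [Finset.sum_congr rfl (fun c _ => h1 c), Finset.sum_sub_distrib]
  congr 1
  rw [Finset.sum_ite_eq' Finset.univ (e.symm b) f]
  simp

lemma pcount_formula (hm : 1 ≤ m) (σ : ℕ → Fin m ≃ Fin m) (n : ℕ) (hn : 1 ≤ n)
    (a b : Fin m) :
    (pcount n σ a b : ℚ) = pq m n + (-1) ^ n * (if compo σ n a = b then 1 else 0) := by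
  induction n, hn using Nat.le_induction generalizing b with
  | base =>
    rw [pcount_one]
    have hc1 : compo σ 1 a = σ 0 a := rfl
    have hmQ : (m : ℚ) ≠ 0 := by positivity
    by_cases hc : σ 0 a = b
    · rw [if_pos hc, if_pos (by rw [hc1]; exact hc)]
      unfold pq
      field_simp
      push_cast; ring
    · rw [if_neg hc, if_neg (by rw [hc1]; exact hc)]
      unfold pq
      field_simp
      push_cast; ring
  | succ n hn ih =>
    rw [pcount_succ n hn σ a b]
    push_cast
    have h1 : ∀ c : Fin m, (if σ n c = b then (0:ℚ) else (pcount n σ a c : ℚ))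
        = (if σ n c = b then (0:ℚ)
            else (pq m n + (-1) ^ n * (if compo σ n a = c then 1 else 0))) := by
      intro c
      by_cases hc : σ n c = b
      · rw [if_pos hc, if_pos hc]
      · rw [if_neg hc, if_neg hc, ih c]
    rw [Finset.sum_congr rfl (fun c _ => h1 c),
      sum_ite_equiv (σ n) b (fun c => pq m n + (-1) ^ n * (if compo σ n a = c then 1 else 0))]
    have h2 : ∑ c : Fin m, (pq m n + (-1) ^ n * (if compo σ n a = c then 1 else 0))
        = m * pq m n + (-1) ^ n := by
      rw [Finset.sum_add_distrib, ← Finset.mul_sum, Finset.sum_const]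
      simp [Finset.sum_ite_eq Finset.univ (compo σ n a) (fun _ => (1:ℚ))]
      skip
    rw [h2]
    have h3 : (compo σ n a = (σ n).symm b) ↔ (compo σ (n+1) a = b) := by
      rw [Equiv.eq_symm_apply]
      rfl
    have hmQ : (m : ℚ) ≠ 0 := by positivity
    by_cases hc : compo σ (n+1) a = b
    · rw [if_pos (h3.2 hc), if_pos hc]
      unfold pq
      field_simp
      ring
    · rw [if_neg (fun h => hc (h3.1 h)), if_neg hc]
      unfold pq
      field_simp
      ring

end ThetaAux

namespace ThetaAux

section Theta

variable (m : ℕ) (l : Fin 3 → ℕ)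

/-- colorings constrained by permutations along each path edge -/
def ColorSet (σ : Fin 3 → ℕ → Fin m ≃ Fin m) : Type :=
  {f : ThetaVertexType 3 l → Fin m //
    ∀ i, ∀ j < l i, f (thetaVert 3 l i (j + 1)) ≠ σ i j (f (thetaVert 3 l i j))}

instance (σ : Fin 3 → ℕ → Fin m ≃ Fin m) : Finite (ColorSet m l σ) := Subtype.finite

noncomputable def colorCount (σ : Fin 3 → ℕ → Fin m ≃ Fin m) : ℕ := Nat.card (ColorSet m l σ)

lemma pathVal_theta (hl : ∀ i, 1 ≤ l i) (f : ThetaVertexType 3 l → Fin m) (i : Fin 3)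
    (j : ℕ) (hj : j ≤ l i) :
    pathVal (l i) (f (Sum.inl 0)) (f (Sum.inl 1)) (fun t => f (Sum.inr ⟨i, t⟩)) j
      = f (thetaVert 3 l i j) := by
  unfold pathVal thetaVert
  by_cases h0 : j = 0
  · rw [dif_pos h0, dif_pos h0]
  · rw [dif_neg h0, dif_neg h0]
    by_cases h1 : j < l i
    · rw [dif_pos h1, dif_pos h1]
    · rw [dif_neg h1, dif_neg h1]

lemma colorCount_eq (hl : ∀ i, 1 ≤ l i) (σ : Fin 3 → ℕ → Fin m ≃ Fin m) :
    colorCount m l σ = ∑ a : Fin m, ∑ b : Fin m, ∏ i : Fin 3, pcount (l i) (σ i) a b := by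
  have E : ColorSet m l σ ≃
      Σ ab : Fin m × Fin m, ∀ i : Fin 3, PathSet (l i) (σ i) ab.1 ab.2 :=
    { toFun := fun f =>
        ⟨(f.1 (Sum.inl 0), f.1 (Sum.inl 1)), fun i =>
          ⟨fun t => f.1 (Sum.inr ⟨i, t⟩), by
            intro j hj
            rw [pathVal_theta m l hl f.1 i (j+1) (by omega),
              pathVal_theta m l hl f.1 i j (by omega)]
            exact f.2 i j hj⟩⟩
      invFun := fun x =>
        ⟨fun v => match v with
          | Sum.inl c => if c = 0 then x.1.1 else x.1.2
          | Sum.inr ⟨i, t⟩ => (x.2 i).1 t, by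
            intro i j hj
            have key : ∀ k, k ≤ l i →
                (fun v => match v with
                  | Sum.inl c => if c = 0 then x.1.1 else x.1.2
                  | Sum.inr (⟨i, t⟩ : Σ i : Fin 3, Fin (l i - 1)) => (x.2 i).1 t)
                  (thetaVert 3 l i k) = pathVal (l i) x.1.1 x.1.2 (x.2 i).1 k := by
              intro k hk
              unfold pathVal thetaVert
              by_cases h0 : k = 0
              · rw [dif_pos h0, dif_pos h0]
                simp
              · rw [dif_neg h0, dif_neg h0]
                by_cases h1 : k < l i
                · rw [dif_pos h1, dif_pos h1]
                · rw [dif_neg h1, dif_neg h1]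
                  simp
            rw [key (j+1) (by omega), key j (by omega)]
            exact (x.2 i).2 j hj⟩
      left_inv := by
        rintro ⟨f, hf⟩
        apply Subtype.ext
        funext v
        match v with
        | Sum.inl c =>
          simp only
          rcases c with ⟨cv, hc⟩
          interval_cases cv
          · rfl
          · rfl
        | Sum.inr ⟨i, t⟩ => rfl
      right_inv := by
        rintro ⟨⟨a, b⟩, g⟩
        rfl }
  unfold colorCount
  rw [Nat.card_congr E, nat_card_sigma]
  rw [Fintype.sum_prod_type]
  apply Finset.sum_congr rfl
  intro a _
  apply Finset.sum_congr rfl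
  intro b _
  rw [Nat.card_pi]
  rfl

end Theta

section Algebra

variable {m : ℕ}

def chi (p : Prop) [Decidable p] : ℚ := if p then 1 else 0

lemma chi_mul (p q : Prop) [Decidable p] [Decidable q] : chi p * chi q = chi (p ∧ q) := by
  unfold chi
  by_cases hp : p <;> by_cases hq : q <;> simp [hp, hq]

lemma sum_chi_eq (x : Fin m) : ∑ b : Fin m, chi (x = b) = 1 := by
  unfold chi
  rw [Finset.sum_ite_eq Finset.univ x (fun _ => (1:ℚ))]
  simp

lemma sum_chi_two (x y : Fin m) : ∑ b : Fin m, chi (x = b) * chi (y = b) = chi (x = y) := by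
  have h : ∀ b : Fin m, chi (x = b) * chi (y = b) = if x = b then chi (y = b) else 0 := by
    intro b
    unfold chi
    by_cases hx : x = b <;> simp [hx]
  rw [Finset.sum_congr rfl fun b _ => h b, Finset.sum_ite_eq Finset.univ x (fun b => chi (y = b))]
  simp only [Finset.mem_univ, if_true]
  unfold chi
  by_cases hxy : x = y
  · simp [hxy]
  · rw [if_neg (fun hc => hxy hc.symm), if_neg hxy]

lemma sum_chi_three (x y z : Fin m) :
    ∑ b : Fin m, chi (x = b) * chi (y = b) * chi (z = b) = chi (x = y) * chi (x = z) := by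
  have h : ∀ b : Fin m, chi (x = b) * chi (y = b) * chi (z = b)
      = if x = b then chi (y = b) * chi (z = b) else 0 := by
    intro b
    unfold chi
    by_cases hx : x = b <;> simp [hx]
  rw [Finset.sum_congr rfl fun b _ => h b,
    Finset.sum_ite_eq Finset.univ x (fun b => chi (y = b) * chi (z = b))]
  simp only [Finset.mem_univ, if_true]
  unfold chi
  rw [if_congr (eq_comm (a := y) (b := x)) rfl rfl, if_congr (eq_comm (a := z) (b := x)) rfl rfl]

/-- inner sum over b for fixed triple (x,y,z). -/
lemma inner_sum (P₀ P₁ P₂ ε : ℚ) (x y z : Fin m) :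
    ∑ b : Fin m, (P₀ + ε * chi (x = b)) * (P₁ + ε * chi (y = b)) * (P₂ + ε * chi (z = b))
      = m * (P₀ * P₁ * P₂) + ε * ε * ε * (chi (x = y) * chi (x = z))
        + ε * (P₁ * P₂ + P₀ * P₂ + P₀ * P₁)
        + ε * ε * (P₂ * chi (x = y) + P₁ * chi (x = z) + P₀ * chi (y = z)) := by
  have expand : ∀ b : Fin m,
      (P₀ + ε * chi (x = b)) * (P₁ + ε * chi (y = b)) * (P₂ + ε * chi (z = b))
      = P₀ * P₁ * P₂
        + ε * (P₁ * P₂ * chi (x = b) + P₀ * P₂ * chi (y = b) + P₀ * P₁ * chi (z = b))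
        + ε * ε * (P₂ * (chi (x = b) * chi (y = b)) + P₁ * (chi (x = b) * chi (z = b))
            + P₀ * (chi (y = b) * chi (z = b)))
        + ε * ε * ε * (chi (x = b) * chi (y = b) * chi (z = b)) := by
    intro b
    ring
  rw [Finset.sum_congr rfl fun b _ => expand b]
  rw [Finset.sum_add_distrib, Finset.sum_add_distrib, Finset.sum_add_distrib]
  rw [Finset.sum_const, ← Finset.mul_sum, ← Finset.mul_sum, ← Finset.mul_sum]
  rw [Finset.sum_add_distrib, Finset.sum_add_distrib, ← Finset.mul_sum, ← Finset.mul_sum,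
    ← Finset.mul_sum, Finset.sum_add_distrib, Finset.sum_add_distrib, ← Finset.mul_sum,
    ← Finset.mul_sum, ← Finset.mul_sum]
  rw [sum_chi_eq, sum_chi_eq, sum_chi_eq, sum_chi_two, sum_chi_two, sum_chi_two, sum_chi_three]
  have hyz : chi (y = z) = chi (x = y) * chi (x = z) + chi (y = z) - chi (x = y) * chi (x = z) := by ring
  simp only [Finset.card_univ, Fintype.card_fin, nsmul_eq_mul]
  ring


lemma chi_nonneg (p : Prop) [Decidable p] : 0 ≤ chi p := by
  unfold chi; split <;> norm_num

lemma chi_le_one (p : Prop) [Decidable p] : chi p ≤ 1 := by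
  unfold chi; split <;> norm_num

lemma total_ge (τ₀ τ₁ τ₂ : Fin m ≃ Fin m) (P₀ P₁ P₂ : ℚ)
    (h0 : 0 ≤ P₀) (h1 : 0 ≤ P₁) (h2 : 1 ≤ P₂) (ε : ℚ) (hε : ε = 1 ∨ ε = -1) :
    (m:ℚ) * m * (P₀ * P₁ * P₂) + ε * m * (P₁ * P₂ + P₀ * P₂ + P₀ * P₁)
      ≤ ∑ a : Fin m, ∑ b : Fin m,
        (P₀ + ε * chi (τ₀ a = b)) * (P₁ + ε * chi (τ₁ a = b)) * (P₂ + ε * chi (τ₂ a = b)) := by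
  have hε2 : ε * ε = 1 := by rcases hε with h | h <;> rw [h] <;> norm_num
  have hstep : ∀ a : Fin m,
      (m:ℚ) * (P₀ * P₁ * P₂) + ε * (P₁ * P₂ + P₀ * P₂ + P₀ * P₁)
        ≤ ∑ b : Fin m,
          (P₀ + ε * chi (τ₀ a = b)) * (P₁ + ε * chi (τ₁ a = b)) * (P₂ + ε * chi (τ₂ a = b)) := by
    intro a
    rw [inner_sum]
    have c1 := chi_nonneg (τ₀ a = τ₁ a)
    have c2 := chi_nonneg (τ₀ a = τ₂ a)
    have c3 := chi_nonneg (τ₁ a = τ₂ a)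
    have d1 := chi_le_one (τ₀ a = τ₁ a)
    have d2 := chi_le_one (τ₀ a = τ₂ a)
    rcases hε with rfl | rfl
    · nlinarith [mul_nonneg c1 c2, mul_nonneg (sub_nonneg.2 h2) c1, mul_nonneg h1 c2,
        mul_nonneg h0 c3]
    · nlinarith [mul_nonneg (sub_nonneg.2 h2) c1, mul_nonneg c1 (sub_nonneg.2 d2),
        mul_nonneg h1 c2, mul_nonneg h0 c3]
  calc (m:ℚ) * m * (P₀ * P₁ * P₂) + ε * m * (P₁ * P₂ + P₀ * P₂ + P₀ * P₁)
      = ∑ _a : Fin m, ((m:ℚ) * (P₀ * P₁ * P₂) + ε * (P₁ * P₂ + P₀ * P₂ + P₀ * P₁)) := by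
        rw [Finset.sum_const]
        simp only [Finset.card_univ, Fintype.card_fin, nsmul_eq_mul]
        ring
    _ ≤ _ := Finset.sum_le_sum fun a _ => hstep a

lemma total_eq (τ₀ τ₁ τ₂ : Fin m ≃ Fin m) (P₀ P₁ P₂ : ℚ) (ε : ℚ) (hε : ε = 1 ∨ ε = -1)
    (hfree : ∀ a : Fin m, τ₀ a ≠ τ₁ a ∧ τ₀ a ≠ τ₂ a ∧ τ₁ a ≠ τ₂ a) :
    ∑ a : Fin m, ∑ b : Fin m,
        (P₀ + ε * chi (τ₀ a = b)) * (P₁ + ε * chi (τ₁ a = b)) * (P₂ + ε * chi (τ₂ a = b))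
      = (m:ℚ) * m * (P₀ * P₁ * P₂) + ε * m * (P₁ * P₂ + P₀ * P₂ + P₀ * P₁) := by
  have hε2 : ε * ε = 1 := by rcases hε with h | h <;> rw [h] <;> norm_num
  have hstep : ∀ a : Fin m,
      ∑ b : Fin m,
          (P₀ + ε * chi (τ₀ a = b)) * (P₁ + ε * chi (τ₁ a = b)) * (P₂ + ε * chi (τ₂ a = b))
        = (m:ℚ) * (P₀ * P₁ * P₂) + ε * (P₁ * P₂ + P₀ * P₂ + P₀ * P₁) := by
    intro a
    rw [inner_sum]
    obtain ⟨e1, e2, e3⟩ := hfree a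
    unfold chi
    rw [if_neg e1, if_neg e2, if_neg e3]
    ring
  rw [Finset.sum_congr rfl fun a _ => hstep a, Finset.sum_const]
  simp only [Finset.card_univ, Fintype.card_fin, nsmul_eq_mul]
  ring

lemma pq_nonneg (hm : 2 ≤ m) (n : ℕ) : 0 ≤ pq m n := by
  unfold pq
  apply div_nonneg _ (by positivity)
  have hm1 : (1:ℚ) ≤ (m:ℚ) - 1 := by
    have : (2:ℚ) ≤ (m:ℚ) := by exact_mod_cast hm
    linarith
  have h1 : (1:ℚ) ≤ ((m:ℚ) - 1) ^ n := one_le_pow₀ hm1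
  have h2 : (-1:ℚ) ^ n ≤ 1 := by
    rcases Nat.even_or_odd n with he | ho
    · rw [he.neg_one_pow]
    · rw [ho.neg_one_pow]; norm_num
  linarith

lemma pq_ge_one (hm : 3 ≤ m) (n : ℕ) (hn : 2 ≤ n) : 1 ≤ pq m n := by
  unfold pq
  have hmQ : (3:ℚ) ≤ (m:ℚ) := by exact_mod_cast hm
  rw [le_div_iff₀ (by linarith)]
  have h1 : ((m:ℚ) - 1) ^ 2 ≤ ((m:ℚ) - 1) ^ n := by
    apply pow_le_pow_right₀ (by linarith) hn
  have h2 : (-1:ℚ) ^ n ≤ 1 := by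
    rcases Nat.even_or_odd n with he | ho
    · rw [he.neg_one_pow]
    · rw [ho.neg_one_pow]; norm_num
  nlinarith

end Algebra

section Graph

variable (m : ℕ) (l : Fin 3 → ℕ)

lemma vert_inj (i : Fin 3) {j j' : ℕ} (hj : j ≤ l i) (hj' : j' ≤ l i)
    (h : thetaVert 3 l i j = thetaVert 3 l i j') : j = j' := by
  unfold thetaVert at h
  split_ifs at h <;> simp_all [Fin.ext_iff] <;> omega

lemma vert_ne_succ (i : Fin 3) {j : ℕ} (hj : j < l i) :
    thetaVert 3 l i j ≠ thetaVert 3 l i (j + 1) := by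
  intro h
  have := vert_inj l i (by omega) (by omega) h
  omega

lemma vert_eq_zero_iff (i : Fin 3) {j : ℕ} (hj : j ≤ l i) :
    thetaVert 3 l i j = Sum.inl 0 ↔ j = 0 := by
  constructor
  · intro h
    unfold thetaVert at h
    split_ifs at h with h1 h2
    · exact h1
    all_goals simp_all
  · intro h
    subst h
    rfl

lemma vert_zero (i : Fin 3) : thetaVert 3 l i 0 = Sum.inl 0 := rfl

lemma vert_interior (i : Fin 3) {j : ℕ} (h0 : j ≠ 0) (h1 : j < l i) :
    thetaVert 3 l i j = Sum.inr ⟨i, ⟨j - 1, by omega⟩⟩ := by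
  unfold thetaVert
  rw [dif_neg h0, dif_pos h1]

lemma vert_last (i : Fin 3) {j : ℕ} (h0 : j ≠ 0) (h1 : ¬ j < l i) :
    thetaVert 3 l i j = Sum.inl 1 := by
  unfold thetaVert
  rw [dif_neg h0, dif_neg h1]

lemma vert_pair_eq (hl : ∀ i, 2 ≤ l i) (i i' : Fin 3) {j j' : ℕ}
    (hj : j < l i) (hj' : j' < l i')
    (h1 : thetaVert 3 l i j = thetaVert 3 l i' j')
    (h2 : thetaVert 3 l i (j + 1) = thetaVert 3 l i' (j' + 1)) : i = i' ∧ j = j' := by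
  by_cases h0 : j = 0
  · subst h0
    have hz : j' = 0 := (vert_eq_zero_iff l i' (by omega)).1 (h1.symm.trans (vert_zero l i))
    subst hz
    rw [vert_interior l i (by omega) (by have := hl i; omega),
      vert_interior l i' (by omega) (by have := hl i'; omega)] at h2
    exact ⟨(Sigma.mk.inj_iff.1 (Sum.inr.inj h2)).1, rfl⟩
  · by_cases h0' : j' = 0
    · exfalso
      apply h0
      subst h0'
      exact (vert_eq_zero_iff l i hj.le).1 (h1.trans (vert_zero l i'))
    · rw [vert_interior l i h0 hj, vert_interior l i' h0' hj'] at h1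
      have h3 := Sum.inr.inj h1
      have hii : i = i' := (Sigma.mk.inj_iff.1 h3).1
      subst hii
      have h5 : (⟨j - 1, by omega⟩ : Fin (l i - 1)) = ⟨j' - 1, by omega⟩ :=
        eq_of_heq (Sigma.mk.inj_iff.1 h3).2
      have h4 : j - 1 = j' - 1 := Fin.mk.inj_iff.1 h5
      exact ⟨rfl, by omega⟩

lemma vert_no_swap (hl : ∀ i, 2 ≤ l i) (i i' : Fin 3) {j j' : ℕ}
    (hj : j < l i) (hj' : j' < l i')
    (h1 : thetaVert 3 l i j = thetaVert 3 l i' (j' + 1))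
    (h2 : thetaVert 3 l i (j + 1) = thetaVert 3 l i' j') : False := by
  by_cases h0 : j = 0
  · subst h0
    have := (vert_eq_zero_iff l i' (j := j' + 1) (by omega)).1 (h1.symm.trans (vert_zero l i))
    omega
  · rw [vert_interior l i h0 hj] at h1
    by_cases hc : j' + 1 < l i'
    · rw [vert_interior l i' (by omega) hc] at h1
      have h3 := Sum.inr.inj h1
      have hii : i = i' := (Sigma.mk.inj_iff.1 h3).1
      subst hii
      have h5 : (⟨j - 1, by omega⟩ : Fin (l i - 1)) = ⟨j' + 1 - 1, by omega⟩ :=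
        eq_of_heq (Sigma.mk.inj_iff.1 h3).2
      have h4 : j - 1 = j' + 1 - 1 := Fin.mk.inj_iff.1 h5
      have h6 : j + 1 = j' := vert_inj l i (by omega) (by omega) h2
      omega
    · rw [vert_last l i' (by omega) hc] at h1
      exact absurd h1 (by simp)

lemma theta_adj_iff (u v : ThetaVertexType 3 l) :
    (thetaGraph 3 l).Adj u v ↔ u ≠ v ∧ ∃ (i : Fin 3) (j : ℕ), j < l i ∧
      ((u = thetaVert 3 l i j ∧ v = thetaVert 3 l i (j + 1)) ∨
        (v = thetaVert 3 l i j ∧ u = thetaVert 3 l i (j + 1))) := by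
  rw [thetaGraph, SimpleGraph.fromEdgeSet_adj]
  constructor
  · rintro ⟨hmem, hne⟩
    refine ⟨hne, ?_⟩
    obtain ⟨i, j, hj, he⟩ := hmem
    rw [Sym2.eq_iff] at he
    exact ⟨i, j, hj, by tauto⟩
  · rintro ⟨hne, i, j, hj, hc⟩
    refine ⟨⟨i, j, hj, ?_⟩, hne⟩
    rw [Sym2.eq_iff]
    tauto

end Graph

section Cover

variable {m : ℕ} (l : Fin 3 → ℕ)

lemma exists_perm_extend {s : Set (Fin m)} {f : Fin m → Fin m} (hf : Set.InjOn f s) :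
    ∃ e : Fin m ≃ Fin m, ∀ x ∈ s, e x = f x := by
  have hmt : s.MapsTo f (Finset.univ : Finset (Fin m)) := fun x _ => Finset.mem_univ _
  obtain ⟨g, hg⟩ := Set.MapsTo.exists_equiv_extend_of_card_eq (by simp) hmt hf
  exact ⟨g.trans (Equiv.subtypeUnivEquiv fun x => Finset.mem_univ x), fun x hx => by
    simp [Equiv.subtypeUnivEquiv, ← hg x hx]⟩

lemma cover_sigma_exists (H : SimpleGraph (ThetaVertexType 3 l × Fin m))
    (hH : IsDPCover (thetaGraph 3 l) m H) (hl : ∀ i, 2 ≤ l i) (i : Fin 3) (j : ℕ) :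
    ∃ e : Fin m ≃ Fin m, j < l i → ∀ c c' : Fin m,
      H.Adj (thetaVert 3 l i j, c) (thetaVert 3 l i (j + 1), c') → e c = c' := by
  by_cases hj : j < l i
  · have hne : thetaVert 3 l i j ≠ thetaVert 3 l i (j + 1) := vert_ne_succ l i hj
    classical
    set s : Set (Fin m) :=
      {c | ∃ c', H.Adj (thetaVert 3 l i j, c) (thetaVert 3 l i (j + 1), c')} with hs
    set f : Fin m → Fin m := fun c =>
      if hc : ∃ c', H.Adj (thetaVert 3 l i j, c) (thetaVert 3 l i (j + 1), c')
      then Classical.choose hc else c with hfdef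
    have hspec : ∀ c ∈ s, H.Adj (thetaVert 3 l i j, c) (thetaVert 3 l i (j + 1), f c) := by
      intro c hc
      have h1 : f c = Classical.choose hc := by
        simp only [hfdef]
        exact dif_pos hc
      rw [h1]
      exact Classical.choose_spec hc
    have hinj : Set.InjOn f s := by
      intro c1 h1 c2 h2 hf
      exact hH.matching₂ _ _ c1 c2 (f c1) hne (hspec c1 h1) (by rw [hf]; exact hspec c2 h2)
    obtain ⟨e, he⟩ := exists_perm_extend hinj
    refine ⟨e, fun _ c c' hadj => ?_⟩
    have hcs : c ∈ s := ⟨c', hadj⟩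
    have := hH.matching₁ _ _ c (f c) c' hne (hspec c hcs) hadj
    rw [he c hcs, this]
  · exact ⟨Equiv.refl _, fun hc => absurd hc hj⟩

lemma cover_ge (H : SimpleGraph (ThetaVertexType 3 l × Fin m))
    (hH : IsDPCover (thetaGraph 3 l) m H) (hl : ∀ i, 2 ≤ l i) :
    ∃ σ : Fin 3 → ℕ → Fin m ≃ Fin m, colorCount m l σ ≤ coverColorings m H := by
  choose σ hσ using cover_sigma_exists l H hH hl
  refine ⟨σ, ?_⟩
  unfold colorCount coverColorings
  have hprop : ∀ f : ColorSet m l σ, ∀ u v : ThetaVertexType 3 l,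
      ¬ H.Adj (u, f.1 u) (v, f.1 v) := by
    intro f u v hadj
    by_cases huv : u = v
    · subst huv
      exact H.irrefl hadj
    · have hG := hH.cross u v _ _ huv hadj
      rw [theta_adj_iff] at hG
      obtain ⟨-, i, j, hj, hc⟩ := hG
      rcases hc with ⟨hu, hv⟩ | ⟨hv, hu⟩
      · subst hu; subst hv
        exact f.2 i j hj (hσ i j hj _ _ hadj).symm
      · subst hu; subst hv
        exact f.2 i j hj (hσ i j hj _ _ hadj.symm).symm
  have hinj : Function.Injective (fun f : ColorSet m l σ =>
      (⟨f.1, hprop f⟩ : {f : ThetaVertexType 3 l → Fin m //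
        ∀ u v, ¬ H.Adj (u, f u) (v, f v)})) :=
    fun f g hfg => by
      have h1 := congrArg Subtype.val hfg
      exact Subtype.ext h1
  exact Nat.card_le_card_of_injective _ hinj

end Cover

section Rat

variable {m : ℕ} (l : Fin 3 → ℕ)

lemma colorCount_rat (hm : 1 ≤ m) (hl : ∀ i, 1 ≤ l i) (σ : Fin 3 → ℕ → Fin m ≃ Fin m)
    (ε : ℚ) (hpar : ∀ i : Fin 3, ((-1 : ℚ)) ^ (l i) = ε) :
    (colorCount m l σ : ℚ) = ∑ a : Fin m, ∑ b : Fin m,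
      (pq m (l 0) + ε * chi (compo (σ 0) (l 0) a = b)) *
      (pq m (l 1) + ε * chi (compo (σ 1) (l 1) a = b)) *
      (pq m (l 2) + ε * chi (compo (σ 2) (l 2) a = b)) := by
  rw [colorCount_eq m l hl σ]
  push_cast
  apply Finset.sum_congr rfl
  intro a _
  apply Finset.sum_congr rfl
  intro b _
  rw [Fin.prod_univ_three]
  rw [pcount_formula hm (σ 0) (l 0) (hl 0) a b, pcount_formula hm (σ 1) (l 1) (hl 1) a b,
    pcount_formula hm (σ 2) (l 2) (hl 2) a b, hpar 0, hpar 1, hpar 2]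
  rfl

end Rat

section Star

variable {m : ℕ}

def rot (hm : 3 ≤ m) (i : Fin 3) : Fin m ≃ Fin m :=
  haveI : NeZero m := ⟨by omega⟩
  Equiv.addLeft (⟨i.1, by omega⟩ : Fin m)

lemma rot_free (hm : 3 ≤ m) (i i' : Fin 3) (hne : i ≠ i') (a : Fin m) :
    rot hm i a ≠ rot hm i' a := by
  haveI : NeZero m := ⟨by omega⟩
  intro h
  unfold rot at h
  simp only [Equiv.coe_addLeft] at h
  have h2 : (⟨i.1, by omega⟩ : Fin m) = ⟨i'.1, by omega⟩ := add_right_cancel h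
  exact hne (Fin.ext (Fin.mk.inj_iff.1 h2))

def sigmaStar (hm : 3 ≤ m) : Fin 3 → ℕ → (Fin m ≃ Fin m) :=
  fun i j => if j = 0 then rot hm i else Equiv.refl _

lemma compo_sigmaStar (hm : 3 ≤ m) (i : Fin 3) (n : ℕ) (hn : 1 ≤ n) :
    compo (sigmaStar hm i) n = rot hm i := by
  induction n, hn using Nat.le_induction with
  | base =>
    apply Equiv.ext
    intro a
    rw [compo_succ_apply]
    simp [sigmaStar]
  | succ n hn ih =>
    apply Equiv.ext
    intro a
    rw [compo_succ_apply, ih]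
    simp only [sigmaStar]
    rw [if_neg (by omega)]
    rfl

variable (l : Fin 3 → ℕ)

/-- the optimal cover -/
def HStar (hm : 3 ≤ m) (hl : ∀ i, 2 ≤ l i) :
    SimpleGraph (ThetaVertexType 3 l × Fin m) where
  Adj p q :=
    (p.1 = q.1 ∧ p.2 ≠ q.2) ∨
    (∃ (i : Fin 3) (j : ℕ), j < l i ∧
      ((p.1 = thetaVert 3 l i j ∧ q.1 = thetaVert 3 l i (j + 1) ∧
          q.2 = sigmaStar hm i j p.2) ∨
        (q.1 = thetaVert 3 l i j ∧ p.1 = thetaVert 3 l i (j + 1) ∧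
          p.2 = sigmaStar hm i j q.2)))
  symm := by
    constructor
    rintro p q (⟨h1, h2⟩ | ⟨i, j, hj, hc⟩)
    · exact Or.inl ⟨h1.symm, h2.symm⟩
    · exact Or.inr ⟨i, j, hj, hc.symm⟩
  loopless := by
    constructor
    rintro p (⟨-, h2⟩ | ⟨i, j, hj, hc⟩)
    · exact h2 rfl
    · rcases hc with ⟨h1, h2, -⟩ | ⟨h1, h2, -⟩ <;>
        exact vert_ne_succ l i hj (h1.symm.trans h2)

lemma HStar_isDPCover (hm : 3 ≤ m) (hl : ∀ i, 2 ≤ l i) :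
    IsDPCover (thetaGraph 3 l) m (HStar l hm hl) where
  listClique := fun v j j' hne => Or.inl ⟨rfl, hne⟩
  cross := by
    rintro u v c c' hne (⟨h1, -⟩ | ⟨i, j, hj, hc⟩)
    · exact absurd h1 hne
    · rw [theta_adj_iff]
      refine ⟨hne, i, j, hj, ?_⟩
      rcases hc with ⟨h1, h2, -⟩ | ⟨h1, h2, -⟩
      · exact Or.inl ⟨h1, h2⟩
      · exact Or.inr ⟨h1, h2⟩
  matching₁ := by
    rintro u v c c₁ c₂ hne (⟨h1, -⟩ | ⟨i, j, hj, hc⟩) hA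
    · exact absurd h1 hne
    rcases hA with ⟨h1, -⟩ | ⟨i', j', hj', hc'⟩
    · exact absurd h1 hne
    rcases hc with ⟨hu, hv, he⟩ | ⟨hv, hu, he⟩ <;>
      rcases hc' with ⟨hu', hv', he'⟩ | ⟨hv', hu', he'⟩
    · -- forward, forward
      obtain ⟨hii, hjj⟩ := vert_pair_eq l hl i i' hj hj' (hu.symm.trans hu') (hv.symm.trans hv')
      subst hii; subst hjj
      exact he.trans he'.symm
    · -- forward, backward
      exact (vert_no_swap l hl i i' hj hj'
        (hu.symm.trans hu') (hv.symm.trans hv')).elim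
    · -- backward, forward
      exact (vert_no_swap l hl i' i hj' hj
        (hu'.symm.trans hu) (hv'.symm.trans hv)).elim
    · -- backward, backward
      obtain ⟨hii, hjj⟩ := vert_pair_eq l hl i i' hj hj' (hv.symm.trans hv') (hu.symm.trans hu')
      subst hii; subst hjj
      have := he.symm.trans he'
      exact (sigmaStar hm i j).injective this
  matching₂ := by
    rintro u v c₁ c₂ c hne (⟨h1, -⟩ | ⟨i, j, hj, hc⟩) hA
    · exact absurd h1 hne
    rcases hA with ⟨h1, -⟩ | ⟨i', j', hj', hc'⟩
    · exact absurd h1 hne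
    rcases hc with ⟨hu, hv, he⟩ | ⟨hv, hu, he⟩ <;>
      rcases hc' with ⟨hu', hv', he'⟩ | ⟨hv', hu', he'⟩
    · obtain ⟨hii, hjj⟩ := vert_pair_eq l hl i i' hj hj' (hu.symm.trans hu') (hv.symm.trans hv')
      subst hii; subst hjj
      have := he.symm.trans he'
      exact (sigmaStar hm i j).injective this
    · exact (vert_no_swap l hl i i' hj hj'
        (hu.symm.trans hu') (hv.symm.trans hv')).elim
    · exact (vert_no_swap l hl i' i hj' hj
        (hu'.symm.trans hu) (hv'.symm.trans hv)).elim
    · obtain ⟨hii, hjj⟩ := vert_pair_eq l hl i i' hj hj' (hv.symm.trans hv') (hu.symm.trans hu')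
      subst hii; subst hjj
      exact he.trans he'.symm

lemma HStar_count (hm : 3 ≤ m) (hl : ∀ i, 2 ≤ l i) :
    coverColorings m (HStar l hm hl) = colorCount m l (sigmaStar hm) := by
  unfold coverColorings colorCount
  apply Nat.card_congr
  apply Equiv.subtypeEquivRight
  intro f
  constructor
  · intro h i j hj hc
    apply h (thetaVert 3 l i j) (thetaVert 3 l i (j + 1))
    exact Or.inr ⟨i, j, hj, Or.inl ⟨rfl, rfl, hc⟩⟩
  · rintro h u v (⟨h1, h2⟩ | ⟨i, j, hj, hc⟩)
    · have h1' : u = v := h1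
      exact h2 (by rw [h1'])
    · rcases hc with ⟨hu, hv, he⟩ | ⟨hv, hu, he⟩
      · have hu' : u = thetaVert 3 l i j := hu
        have hv' : v = thetaVert 3 l i (j + 1) := hv
        have he2 : f v = sigmaStar hm i j (f u) := he
        exact h i j hj (by rw [← hu', ← hv']; exact he2)
      · have hv' : v = thetaVert 3 l i j := hv
        have hu' : u = thetaVert 3 l i (j + 1) := hu
        have he2 : f u = sigmaStar hm i j (f v) := he
        exact h i j hj (by rw [← hu', ← hv']; exact he2)

end Star

lemma neg_one_pow_mod (a b : ℕ) (h : a % 2 = b % 2) : ((-1 : ℚ)) ^ a = (-1) ^ b := by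
  rcases Nat.even_or_odd a with he | ho
  · have hb : Even b := by
      rw [Nat.even_iff] at he ⊢
      omega
    rw [he.neg_one_pow, hb.neg_one_pow]
  · have hb : Odd b := by
      rw [Nat.odd_iff] at ho ⊢
      omega
    rw [ho.neg_one_pow, hb.neg_one_pow]

lemma final_algebra (m : ℕ) (hm : 3 ≤ m) (l₁ l₂ l₃ : ℕ) (ε : ℚ)
    (h1 : (-1 : ℚ) ^ l₁ = ε) (h2 : (-1 : ℚ) ^ l₂ = ε) (h3 : (-1 : ℚ) ^ l₃ = ε)
    (hε : ε = 1 ∨ ε = -1) :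
    (m : ℚ) * m * (pq m l₁ * pq m l₂ * pq m l₃)
      + ε * m * (pq m l₂ * pq m l₃ + pq m l₁ * pq m l₃ + pq m l₁ * pq m l₂)
    = (1 / (m : ℚ)) *
        (((m : ℚ) - 1) ^ (l₁ + l₂ + l₃) - ((m : ℚ) - 1) ^ l₁ - ((m : ℚ) - 1) ^ l₂ -
          ((m : ℚ) - 1) ^ l₃ + 2 * (-1 : ℚ) ^ (l₁ + l₂ + l₃)) := by
  have hm0 : (m : ℚ) ≠ 0 := by positivity
  have e1 : ((m : ℚ) - 1) ^ (l₁ + l₂ + l₃)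
      = ((m:ℚ)-1) ^ l₁ * ((m:ℚ)-1) ^ l₂ * ((m:ℚ)-1) ^ l₃ := by
    rw [pow_add, pow_add]
  have e2 : (-1 : ℚ) ^ (l₁ + l₂ + l₃) = (-1:ℚ) ^ l₁ * (-1:ℚ) ^ l₂ * (-1:ℚ) ^ l₃ := by
    rw [pow_add, pow_add]
  unfold pq
  rw [e1, e2, h1, h2, h3]
  rcases hε with rfl | rfl <;> field_simp <;> ring

end ThetaAux

/-- Theorem 1.3(iv): the DP color function of the theta graph with all three
path lengths of the same parity. -/
theorem stmt_19 (l₁ l₂ l₃ : ℕ) (h1 : 2 ≤ l₁) (h12 : l₁ ≤ l₂) (h23 : l₂ ≤ l₃)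
    (hp12 : l₁ % 2 = l₂ % 2) (hp23 : l₂ % 2 = l₃ % 2)
    (m : ℕ) (hm : 3 ≤ m) :
    (dpColorFunction (thetaGraph 3 ![l₁, l₂, l₃]) m : ℚ) =
      (1 / (m : ℚ)) *
        (((m : ℚ) - 1) ^ (l₁ + l₂ + l₃) - ((m : ℚ) - 1) ^ l₁ - ((m : ℚ) - 1) ^ l₂ -
          ((m : ℚ) - 1) ^ l₃ + 2 * (-1 : ℚ) ^ (l₁ + l₂ + l₃)) := by
  classical
  set l : Fin 3 → ℕ := ![l₁, l₂, l₃] with hldef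
  have hl0 : l 0 = l₁ := rfl
  have hl1 : l 1 = l₂ := rfl
  have hl2 : l 2 = l₃ := rfl
  have hl : ∀ i, 2 ≤ l i := by
    intro i
    fin_cases i <;> simp [hldef] <;> omega
  set ε : ℚ := (-1 : ℚ) ^ l₁ with hedef
  have hpar : ∀ i : Fin 3, ((-1 : ℚ)) ^ (l i) = ε := by
    intro i
    fin_cases i
    · rfl
    · exact ThetaAux.neg_one_pow_mod l₂ l₁ (by omega)
    · exact ThetaAux.neg_one_pow_mod l₃ l₁ (by omega)
  have hε : ε = 1 ∨ ε = -1 := by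
    rcases Nat.even_or_odd l₁ with he | ho
    · exact Or.inl (by rw [hedef, he.neg_one_pow])
    · exact Or.inr (by rw [hedef, ho.neg_one_pow])
  set F : ℚ := (m : ℚ) * m * (ThetaAux.pq m (l 0) * ThetaAux.pq m (l 1) * ThetaAux.pq m (l 2))
      + ε * m * (ThetaAux.pq m (l 1) * ThetaAux.pq m (l 2)
        + ThetaAux.pq m (l 0) * ThetaAux.pq m (l 2)
        + ThetaAux.pq m (l 0) * ThetaAux.pq m (l 1)) with hFdef
  -- the optimal cover
  set n₀ : ℕ := coverColorings m (ThetaAux.HStar l hm hl) with hn0def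
  have hmem : n₀ ∈ {n | ∃ H : SimpleGraph (ThetaVertexType 3 l × Fin m),
      IsDPCover (thetaGraph 3 l) m H ∧ n = coverColorings m H} :=
    ⟨ThetaAux.HStar l hm hl, ThetaAux.HStar_isDPCover l hm hl, rfl⟩
  have hn0F : (n₀ : ℚ) = F := by
    rw [hn0def, ThetaAux.HStar_count l hm hl,
      ThetaAux.colorCount_rat l (by omega) (fun i => by have := hl i; omega)
        (ThetaAux.sigmaStar hm) ε hpar]
    have hc : ∀ i : Fin 3, ThetaAux.compo (ThetaAux.sigmaStar hm i) (l i) = ThetaAux.rot hm i :=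
      fun i => ThetaAux.compo_sigmaStar hm i (l i) (by have := hl i; omega)
    rw [hc 0, hc 1, hc 2]
    rw [ThetaAux.total_eq (ThetaAux.rot hm 0) (ThetaAux.rot hm 1) (ThetaAux.rot hm 2)
      _ _ _ ε hε (fun a => ⟨ThetaAux.rot_free hm 0 1 (by decide) a,
        ThetaAux.rot_free hm 0 2 (by decide) a, ThetaAux.rot_free hm 1 2 (by decide) a⟩)]
  have hlow : ∀ n ∈ {n | ∃ H : SimpleGraph (ThetaVertexType 3 l × Fin m),
      IsDPCover (thetaGraph 3 l) m H ∧ n = coverColorings m H}, n₀ ≤ n := by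
    rintro n ⟨H, hH, rfl⟩
    obtain ⟨σ, hle⟩ := ThetaAux.cover_ge l H hH hl
    have hF : F ≤ (ThetaAux.colorCount m l σ : ℚ) := by
      rw [ThetaAux.colorCount_rat l (by omega) (fun i => by have := hl i; omega) σ ε hpar]
      exact ThetaAux.total_ge _ _ _ _ _ _
        (ThetaAux.pq_nonneg (by omega) (l 0)) (ThetaAux.pq_nonneg (by omega) (l 1))
        (ThetaAux.pq_ge_one hm (l 2) (hl 2)) ε hε
    have : (n₀ : ℚ) ≤ (coverColorings m H : ℚ) := by
      rw [hn0F]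
      calc F ≤ (ThetaAux.colorCount m l σ : ℚ) := hF
        _ ≤ _ := by exact_mod_cast hle
    exact_mod_cast this
  have hsinf : dpColorFunction (thetaGraph 3 l) m = n₀ := by
    unfold dpColorFunction
    exact le_antisymm (Nat.sInf_le hmem) (le_csInf ⟨n₀, hmem⟩ hlow)
  rw [hsinf, hn0F, hFdef, hl0, hl1, hl2]
  exact ThetaAux.final_algebra m hm l₁ l₂ l₃ ε (by rw [hedef])
    (ThetaAux.neg_one_pow_mod l₂ l₁ (by omega)) (ThetaAux.neg_one_pow_mod l₃ l₁ (by omega)) hε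
end
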